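/- arXiv:1902.06879 — 6 statements merged into one kernel-verified Lean document; each statement's English description precedes it below -/
import Mathlib

section
/- Let 𝔰 = (s_1,…,s_r) be a tuple of positive integers and let P_1,…,P_r ∈ F[t] be polynomials, say P_i = Σ_{j=0}^{n_i} u_{ij} t^j, satisfying max_{0≤j≤n_i} |u_{ij}| < q^{s_i·q/(q−1)} for each 1 ≤ i ≤ r. Set J := {0,…,n_1} × ⋯ × {0,…,n_r}, and for j = (j_1,…,j_r) ∈ J set u_j := (u_{1j_1},…,u_{rj_r}) ∈ F^r. Then: (a) for each j ∈ J the family (u_{1j_1}^{q^{i_1}}⋯u_{rj_r}^{q^{i_r}}·(𝕃_{i_1}^{s_1}⋯𝕃_{i_r}^{s_r})^{−1}), indexed by integers i_1 > ⋯ > i_r ≥ 0, is summable in F[[t]] for the product topology, with sum 𝔏i_{𝔰,u_j}; (b) the family (P_1^{(i_1)}⋯P_r^{(i_r)}·(𝕃_{i_1}^{s_1}⋯𝕃_{i_r}^{s_r})^{−1}), indexed by integers i_1 > ⋯ > i_r ≥ 0, is summable in F[[t]]; (c) Σ_{i_1>⋯>i_r≥0} P_1^{(i_1)}⋯P_r^{(i_r)}·(𝕃_{i_1}^{s_1}⋯𝕃_{i_r}^{s_r})^{−1}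 = Σ_{j∈J} t^{j_1+⋯+j_r}·𝔏i_{𝔰,u_j} in F[[t]]. (Taking P_i = H_{s_i−1}, the Anderson–Thakur polynomials, the left-hand side is the Anderson–Thakur series ζ_A^{AT}(𝔰); this is Proposition 5.3 of the paper.) -/
open PowerSeries Filter Topology
open scoped ENNReal

set_option linter.unusedSectionVars false
set_option maxHeartbeats 1000000

noncomputable section

/-- The product (coefficientwise) topology on `PowerSeries F`. -/
instance psTop {F : Type*} [Semiring F] [TopologicalSpace F] :
    TopologicalSpace (PowerSeries F) :=
  TopologicalSpace.induced (fun φ (n : ℕ) => PowerSeries.coeff n φ) inferInstance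

variable {F : Type*} [Field F]

/-- `𝕃_i = (t-θ^q)⋯(t-θ^{q^i})` as a formal power series. -/
def LL (q : ℕ) (θ : F) (i : ℕ) : PowerSeries F :=
  ∏ m ∈ Finset.range i, (PowerSeries.X - PowerSeries.C (θ ^ q ^ (m + 1)))

/-- General term `u_1^{q^{i_1}}⋯u_r^{q^{i_r}}·(𝕃_{i_1}^{s_1}⋯𝕃_{i_r}^{s_r})⁻¹` of a
t-motivic Carlitz multiple (star) polylogarithm. -/
def polyLogTerm (q : ℕ) (θ : F) {r : ℕ} (s : Fin r → ℕ) (u : Fin r → F)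
    (i : Fin r → ℕ) : PowerSeries F :=
  ∏ k, PowerSeries.C (u k ^ q ^ i k) * (LL q θ (i k) ^ s k)⁻¹

/-- `n`-fold Frobenius (`q^n`-th power) twist of a polynomial, applied coefficientwise. -/
def ptwist (q n : ℕ) (P : Polynomial F) : Polynomial F :=
  ∑ j ∈ Finset.range (P.natDegree + 1), Polynomial.C (P.coeff j ^ q ^ n) * Polynomial.X ^ j

namespace St0

section Transfer
variable {F : Type*} [Semiring F] [TopologicalSpace F] {ι : Type*}

lemma coeff_isInducing :
    Topology.IsInducing (fun φ (n : ℕ) => PowerSeries.coeff (R := F) n φ) := ⟨rfl⟩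

lemma coeff_injective :
    Function.Injective (fun φ (n : ℕ) => PowerSeries.coeff (R := F) n φ) := by
  intro a b h
  ext n
  exact congrFun h n

instance psT2 [T2Space F] : T2Space (PowerSeries F) :=
  Topology.IsEmbedding.t2Space ⟨coeff_isInducing, coeff_injective⟩

lemma ps_hasSum_iff {f : ι → PowerSeries F} {a : PowerSeries F} :
    HasSum f a ↔ ∀ n, HasSum (fun i => coeff n (f i)) (coeff n a) := by
  have h1 : HasSum f a ↔
      HasSum (fun i (n : ℕ) => coeff n (f i)) (fun n => coeff n a) := by
    unfold HasSum
    rw [coeff_isInducing.tendsto_nhds_iff]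
    have heq : ((fun φ (n : ℕ) => coeff n φ) ∘ fun S : Finset ι => ∑ i ∈ S, f i)
        = fun S : Finset ι => ∑ i ∈ S, (fun n : ℕ => coeff n (f i)) := by
      funext S n
      simp [map_sum]
    rw [heq]
  rw [h1, Pi.hasSum]

lemma ps_summable_iff {f : ι → PowerSeries F} :
    Summable f ↔ ∀ n, Summable fun i => coeff n (f i) := by
  constructor
  · rintro ⟨a, ha⟩ n
    exact ⟨_, ps_hasSum_iff.mp ha n⟩
  · intro h
    refine ⟨PowerSeries.mk (fun n => (h n).choose), ps_hasSum_iff.mpr fun n => ?_⟩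
    simpa [PowerSeries.coeff_mk] using (h n).choose_spec

variable [ContinuousAdd F]

lemma ps_hasSum_finsetSum {γ : Type*} {s : Finset γ} {f : γ → ι → PowerSeries F}
    {a : γ → PowerSeries F} (h : ∀ j ∈ s, HasSum (f j) (a j)) :
    HasSum (fun i => ∑ j ∈ s, f j i) (∑ j ∈ s, a j) := by
  rw [ps_hasSum_iff]
  intro n
  simp only [map_sum]
  exact hasSum_sum fun j hj => ps_hasSum_iff.mp (h j hj) n

lemma ps_hasSum_mul_left [IsTopologicalSemiring F] {f : ι → PowerSeries F} {a : PowerSeries F}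
    (g : PowerSeries F) (h : HasSum f a) :
    HasSum (fun i => g * f i) (g * a) := by
  rw [ps_hasSum_iff] at h ⊢
  intro n
  simp only [PowerSeries.coeff_mul]
  exact hasSum_sum fun p _ => (h p.2).mul_left _

end Transfer

section Norms
variable {F : Type*} [NormedField F] [IsUltrametricDist F]

lemma coeff_mul_le {φ ψ : PowerSeries F} {a b : ℝ} (hb : 0 ≤ b)
    (hφ : ∀ d, ‖coeff d φ‖ ≤ a) (hψ : ∀ d, ‖coeff d ψ‖ ≤ b) (d : ℕ) :
    ‖coeff d (φ * ψ)‖ ≤ a * b := by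
  have ha : 0 ≤ a := le_trans (norm_nonneg _) (hφ 0)
  rw [PowerSeries.coeff_mul]
  refine IsUltrametricDist.norm_sum_le_of_forall_le_of_nonneg (by positivity) ?_
  rintro ⟨p1, p2⟩ _
  rw [norm_mul]
  exact mul_le_mul (hφ p1) (hψ p2) (norm_nonneg _) ha

lemma coeff_prod_le {ι : Type*} (t : Finset ι) (f : ι → PowerSeries F) (a : ι → ℝ)
    (h : ∀ k, ∀ d, ‖coeff d (f k)‖ ≤ a k) :
    ∀ d, ‖coeff d (∏ k ∈ t, f k)‖ ≤ ∏ k ∈ t, a k := by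
  induction t using Finset.cons_induction with
  | empty =>
      intro d
      simp only [Finset.prod_empty, PowerSeries.coeff_one]
      split_ifs <;> simp
  | cons k t hk ih =>
      intro d
      rw [Finset.prod_cons, Finset.prod_cons]
      exact coeff_mul_le
        (Finset.prod_nonneg fun m _ => le_trans (norm_nonneg _) (h m 0)) (h k) ih d

lemma coeff_pow_le {φ : PowerSeries F} {a : ℝ} (h : ∀ d, ‖coeff d φ‖ ≤ a) (m : ℕ) :
    ∀ d, ‖coeff d (φ ^ m)‖ ≤ a ^ m := by
  have := coeff_prod_le (Finset.range m) (fun _ => φ) (fun _ => a) (fun _ => h)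
  simpa using this

lemma coeff_inv_le (φ : PowerSeries F) (h0 : constantCoeff φ ≠ 0)
    (hdom : ∀ d, ‖coeff d φ‖ ≤ ‖constantCoeff φ‖) (d : ℕ) :
    ‖coeff d φ⁻¹‖ ≤ ‖constantCoeff φ‖⁻¹ := by
  induction d using Nat.strong_induction_on with
  | _ d ih =>
    rw [PowerSeries.coeff_inv]
    split_ifs with hd
    · rw [norm_inv]
    · rw [norm_mul, norm_neg, norm_inv]
      have hsum : ‖∑ x ∈ Finset.HasAntidiagonal.antidiagonal d,
          if x.2 < d then coeff x.1 φ * coeff x.2 φ⁻¹ else 0‖ ≤ 1 := by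
        refine IsUltrametricDist.norm_sum_le_of_forall_le_of_nonneg zero_le_one ?_
        rintro ⟨p1, p2⟩ _
        split_ifs with hp
        · rw [norm_mul]
          calc ‖coeff p1 φ‖ * ‖coeff p2 φ⁻¹‖
              ≤ ‖constantCoeff φ‖ * ‖constantCoeff φ‖⁻¹ :=
                mul_le_mul (hdom p1) (ih p2 hp) (norm_nonneg _) (norm_nonneg _)
            _ = 1 := mul_inv_cancel₀ (norm_ne_zero_iff.mpr h0)
        · simp
      calc ‖constantCoeff φ‖⁻¹ * ‖∑ x ∈ Finset.HasAntidiagonal.antidiagonal d,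
            if x.2 < d then coeff x.1 φ * coeff x.2 φ⁻¹ else 0‖
          ≤ ‖constantCoeff φ‖⁻¹ * 1 :=
            mul_le_mul_of_nonneg_left hsum (inv_nonneg.mpr (norm_nonneg _))
        _ = _ := mul_one _

lemma LL_constantCoeff (q : ℕ) (θ : F) (i : ℕ) :
    constantCoeff (LL q θ i) = ∏ m ∈ Finset.range i, (-(θ ^ q ^ (m + 1))) := by
  simp [LL, map_prod]

lemma coeff_factor_le (q : ℕ) (θ : F) (hθ1 : 1 ≤ ‖θ‖) (m : ℕ) (d : ℕ) :
    ‖coeff d (PowerSeries.X - PowerSeries.C (θ ^ q ^ (m + 1)))‖ ≤ ‖θ‖ ^ q ^ (m + 1) := by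
  rw [map_sub]
  match d with
  | 0 => simp [PowerSeries.coeff_zero_eq_constantCoeff, norm_pow]
  | 1 =>
      simp only [PowerSeries.coeff_one_X, PowerSeries.coeff_C, if_neg (by norm_num : (1:ℕ) ≠ 0),
        sub_zero, norm_one]
      exact one_le_pow₀ hθ1
  | (d+2) =>
      simp only [PowerSeries.coeff_X, PowerSeries.coeff_C]
      rw [if_neg (by omega), if_neg (by omega), sub_zero, norm_zero]
      positivity

lemma coeff_LL_pow_le (q : ℕ) (θ : F) (hθ1 : 1 ≤ ‖θ‖) (i sk : ℕ) :
    ∀ d, ‖coeff d (LL q θ i ^ sk)‖ ≤ ∏ m ∈ Finset.range i, (‖θ‖ ^ q ^ (m + 1)) ^ sk := by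
  rw [LL, ← Finset.prod_pow]
  exact coeff_prod_le _ _ _ (fun m => coeff_pow_le (coeff_factor_le q θ hθ1 m) sk)

lemma norm_constLL (q : ℕ) (θ : F) (i sk : ℕ) :
    ‖constantCoeff (LL q θ i ^ sk)‖ = ∏ m ∈ Finset.range i, (‖θ‖ ^ q ^ (m + 1)) ^ sk := by
  rw [map_pow, LL_constantCoeff, ← Finset.prod_pow, norm_prod]
  exact Finset.prod_congr rfl fun m _ => by rw [norm_pow, norm_neg, norm_pow]

lemma constLL_ne (q : ℕ) (θ : F) (hθ1 : 1 ≤ ‖θ‖) (i sk : ℕ) :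
    constantCoeff (LL q θ i ^ sk) ≠ 0 := by
  rw [← norm_ne_zero_iff, norm_constLL]
  have : (0:ℝ) < ∏ m ∈ Finset.range i, (‖θ‖ ^ q ^ (m + 1)) ^ sk :=
    Finset.prod_pos fun m _ => by positivity
  linarith

lemma coeff_LL_inv_le (q : ℕ) (θ : F) (hθ1 : 1 ≤ ‖θ‖) (i sk : ℕ) (d : ℕ) :
    ‖coeff d ((LL q θ i ^ sk)⁻¹)‖ ≤ (∏ m ∈ Finset.range i, (‖θ‖ ^ q ^ (m + 1)) ^ sk)⁻¹ := by
  have h := coeff_inv_le (LL q θ i ^ sk) (constLL_ne q θ hθ1 i sk)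
    (fun d => (coeff_LL_pow_le q θ hθ1 i sk d).trans_eq (norm_constLL q θ i sk).symm) d
  rwa [norm_constLL] at h

end Norms

section RealArith

lemma geom_identity (q : ℕ) (hq2 : 2 ≤ q) (sk i : ℕ) :
    ∏ m ∈ Finset.range i, ((q:ℝ) ^ q ^ (m + 1)) ^ sk
      = ((q:ℝ) ^ ((sk : ℝ) * q / ((q:ℝ) - 1))) ^ ((q:ℝ) ^ i - 1) := by
  have hq0 : (0:ℝ) < q := by exact_mod_cast Nat.lt_of_lt_of_le (by norm_num) hq2
  have hq2R : (2:ℝ) ≤ q := by exact_mod_cast hq2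
  have hq1 : (q:ℝ) ≠ 1 := by nlinarith
  have hq1' : (q:ℝ) - 1 ≠ 0 := by nlinarith
  have hL : ∏ m ∈ Finset.range i, ((q:ℝ) ^ q ^ (m + 1)) ^ sk
      = (q:ℝ) ^ (∑ m ∈ Finset.range i, q ^ (m + 1) * sk) := by
    rw [← Finset.prod_pow_eq_pow_sum]
    exact Finset.prod_congr rfl fun m _ => (pow_mul _ _ _).symm
  rw [hL, ← Real.rpow_natCast (q:ℝ) (∑ m ∈ Finset.range i, q ^ (m + 1) * sk),
    ← Real.rpow_mul hq0.le]
  congr 1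
  push_cast
  have h2 : ∑ m ∈ Finset.range i, (q:ℝ) ^ (m + 1) * (sk:ℝ)
      = (∑ m ∈ Finset.range i, (q:ℝ) ^ m) * ((q:ℝ) * sk) := by
    rw [Finset.sum_mul]
    exact Finset.sum_congr rfl fun m _ => by ring
  rw [h2, geom_sum_eq hq1]
  field_simp

lemma fac_eq (q i : ℕ) {M c : ℝ} (hM : 0 ≤ M) (hc : 0 < c) :
    M ^ (q ^ i) * (c ^ ((q:ℝ) ^ i - 1))⁻¹ = c * (M / c) ^ ((q:ℝ) ^ i) := by
  have hcx : c ^ ((q:ℝ) ^ i) ≠ 0 := (Real.rpow_pos_of_pos hc _).ne'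
  rw [Real.div_rpow hM hc.le, Real.rpow_sub hc, Real.rpow_one,
    ← Real.rpow_natCast M (q ^ i)]
  have hcast : ((q ^ i : ℕ) : ℝ) = (q:ℝ) ^ i := by push_cast; ring
  rw [hcast]
  field_simp

lemma fac_le1 (q i : ℕ) (hq2 : 2 ≤ q) {M c : ℝ} (hM : 0 ≤ M) (hc : 0 < c) (hMc : M < c) :
    M ^ (q ^ i) * (c ^ ((q:ℝ) ^ i - 1))⁻¹ ≤ c := by
  rw [fac_eq q i hM hc]
  have hx : (0:ℝ) ≤ (q:ℝ) ^ i := by positivity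
  calc c * (M / c) ^ ((q:ℝ) ^ i) ≤ c * 1 :=
        mul_le_mul_of_nonneg_left
          (Real.rpow_le_one (div_nonneg hM hc.le) ((div_le_one hc).mpr hMc.le) hx) hc.le
    _ = c := mul_one c

lemma fac_le2 (q i : ℕ) (hq2 : 2 ≤ q) {M c τ : ℝ} (hM : 0 ≤ M) (hc : 0 < c)
    (hτ1 : M / c ≤ τ) (hτ0 : 0 < τ) (hτle : τ ≤ 1) :
    M ^ (q ^ i) * (c ^ ((q:ℝ) ^ i - 1))⁻¹ ≤ c * τ ^ i := by
  rw [fac_eq q i hM hc]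
  have hx : (0:ℝ) ≤ (q:ℝ) ^ i := by positivity
  have hiq : (i:ℝ) ≤ (q:ℝ) ^ i := by
    have := Nat.lt_pow_self (n := i) (show 1 < q by omega)
    calc (i:ℝ) ≤ ((q ^ i : ℕ) : ℝ) := by exact_mod_cast this.le
      _ = (q:ℝ) ^ i := by push_cast; ring
  calc c * (M / c) ^ ((q:ℝ) ^ i) ≤ c * τ ^ ((q:ℝ) ^ i) :=
        mul_le_mul_of_nonneg_left (Real.rpow_le_rpow (div_nonneg hM hc.le) hτ1 hx) hc.le
    _ ≤ c * τ ^ ((i:ℕ):ℝ) :=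
        mul_le_mul_of_nonneg_left (Real.rpow_le_rpow_of_exponent_ge hτ0 hτle hiq) hc.le
    _ = c * τ ^ i := by rw [Real.rpow_natCast]

end RealArith

end St0

open St0

/-- Proposition 5.3 of the paper.  For polynomials `P_1,…,P_r` with small
coefficients, the family `P_1^{(i_1)}⋯P_r^{(i_r)}/(𝕃_{i_1}^{s_1}⋯𝕃_{i_r}^{s_r})`
(over `i_1 > ⋯ > i_r ≥ 0`) is summable in `F[[t]]`, each non-star polylogarithm family at the
coefficient points is summable, and the sum decomposes as
`Σ_{j∈J} t^{j_1+⋯+j_r}·𝔏i_{𝔰,u_j}`. -/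
theorem statement0
    {F : Type*} [NormedField F] [IsUltrametricDist F] [CompleteSpace F]
    (q : ℕ) (hq : IsPrimePow q) (θ : F) (hθ : ‖θ‖ = (q : ℝ))
    {r : ℕ} (hr : 0 < r) (s : Fin r → ℕ) (hs : ∀ k, 0 < s k)
    (n : Fin r → ℕ) (u : Fin r → ℕ → F)
    (P : Fin r → Polynomial F)
    (hP : ∀ k, P k = ∑ j ∈ Finset.range (n k + 1), Polynomial.C (u k j) * Polynomial.X ^ j)
    (hu : ∀ k, ∀ j ≤ n k, ‖u k j‖ < (q : ℝ) ^ ((s k : ℝ) * (q : ℝ) / ((q : ℝ) - 1))) :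
    (∀ j ∈ Fintype.piFinset (fun k => Finset.range (n k + 1)),
      Summable (fun i : {i : Fin r → ℕ // StrictAnti i} =>
        polyLogTerm q θ s (fun k => u k (j k)) i.1))
    ∧ Summable (fun i : {i : Fin r → ℕ // StrictAnti i} =>
        ∏ k, ((ptwist q (i.1 k) (P k) : PowerSeries F) * (LL q θ (i.1 k) ^ s k)⁻¹))
    ∧ (∑' i : {i : Fin r → ℕ // StrictAnti i},
          ∏ k, ((ptwist q (i.1 k) (P k) : PowerSeries F) * (LL q θ (i.1 k) ^ s k)⁻¹))
        = ∑ j ∈ Fintype.piFinset (fun k => Finset.range (n k + 1)),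
            (PowerSeries.X : PowerSeries F) ^ (∑ k, j k) *
              ∑' i : {i : Fin r → ℕ // StrictAnti i},
                polyLogTerm q θ s (fun k => u k (j k)) i.1 := by
  classical
  have hq2 : 2 ≤ q := hq.two_le
  have hq0R : (0:ℝ) < q := by
    have : 0 < q := by omega
    exact_mod_cast this
  have hθ1 : 1 ≤ ‖θ‖ := by
    rw [hθ]
    have h1q : (1:ℕ) ≤ q := by omega
    exact_mod_cast h1q
  obtain ⟨k0, hk0⟩ : ∃ k0 : Fin r, k0 = (⟨0, hr⟩ : Fin r) := ⟨_, rfl⟩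
  obtain ⟨c, hcdef⟩ : ∃ c : Fin r → ℝ,
      ∀ k, c k = (q:ℝ) ^ ((s k : ℝ) * (q:ℝ) / ((q:ℝ) - 1)) := ⟨_, fun _ => rfl⟩
  have hc0 : ∀ k, 0 < c k := fun k => by
    rw [hcdef]; exact Real.rpow_pos_of_pos hq0R _
  obtain ⟨M, hMdef⟩ : ∃ M : Fin r → ℝ,
      ∀ k, M k = (Finset.range (n k + 1)).sup' Finset.nonempty_range_add_one
        (fun j => ‖u k j‖) := ⟨_, fun _ => rfl⟩
  have hMmem : ∀ k, ∀ j ≤ n k, ‖u k j‖ ≤ M k := by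
    intro k j hj
    rw [hMdef]
    exact Finset.le_sup' (fun j => ‖u k j‖) (Finset.mem_range.mpr (Nat.lt_succ_of_le hj))
  have hM0 : ∀ k, 0 ≤ M k := fun k => (norm_nonneg _).trans (hMmem k 0 (Nat.zero_le _))
  have hMc : ∀ k, M k < c k := fun k => by
    rw [hMdef, hcdef]
    exact (Finset.sup'_lt_iff _).mpr fun j hj =>
      hu k j (Nat.lt_succ_iff.mp (Finset.mem_range.mp hj))
  obtain ⟨τ, hτdef⟩ : ∃ τ : ℝ, τ = max (M k0 / c k0) 2⁻¹ := ⟨_, rfl⟩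
  have hτ0 : 0 < τ := by
    rw [hτdef]
    exact lt_of_lt_of_le (by norm_num) (le_max_right _ _)
  have hτ1 : τ < 1 := by
    rw [hτdef]
    exact max_lt ((div_lt_one (hc0 k0)).mpr (hMc k0)) (by norm_num)
  -- coefficient bound for the inverse factors
  have hLLinvN : ∀ (k : Fin r) (i d : ℕ),
      ‖coeff d ((LL q θ i ^ s k)⁻¹)‖ ≤ ((c k) ^ ((q:ℝ) ^ i - 1))⁻¹ := by
    intro k i d
    have h := coeff_LL_inv_le q θ hθ1 i (s k) d
    rw [hθ, geom_identity q hq2 (s k) i, ← hcdef k] at h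
    exact h
  -- coefficient bound for the constant factors
  have hCb : ∀ (k : Fin r) (j : ℕ), j < n k + 1 → ∀ (i d : ℕ),
      ‖coeff d (C (u k j ^ q ^ i))‖ ≤ M k ^ q ^ i := by
    intro k j hj i d
    rw [PowerSeries.coeff_C]
    split_ifs
    · rw [norm_pow]
      exact pow_le_pow_left₀ (norm_nonneg _) (hMmem k j (by omega)) _
    · rw [norm_zero]
      exact pow_nonneg (hM0 k) _
  have hfaca : ∀ (k : Fin r) (j : ℕ), j < n k + 1 → ∀ (i d : ℕ),
      ‖coeff d (C (u k j ^ q ^ i) * (LL q θ i ^ s k)⁻¹)‖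
        ≤ M k ^ q ^ i * ((c k) ^ ((q:ℝ) ^ i - 1))⁻¹ := by
    intro k j hj i d
    exact coeff_mul_le (inv_nonneg.mpr (Real.rpow_pos_of_pos (hc0 k) _).le)
      (hCb k j hj i) (hLLinvN k i) d
  obtain ⟨B, hBdef⟩ : ∃ B : {i : Fin r → ℕ // StrictAnti i} → ℝ,
      ∀ i, B i = ∏ k, M k ^ q ^ i.1 k * ((c k) ^ ((q:ℝ) ^ (i.1 k) - 1))⁻¹ :=
    ⟨_, fun _ => rfl⟩
  have hB0 : ∀ i, 0 ≤ B i := fun i => by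
    rw [hBdef]
    exact Finset.prod_nonneg fun k _ =>
      mul_nonneg (pow_nonneg (hM0 k) _) (inv_nonneg.mpr (Real.rpow_pos_of_pos (hc0 k) _).le)
  have hBle : ∀ i : {i : Fin r → ℕ // StrictAnti i},
      B i ≤ (∏ k, c k) * τ ^ (i.1 k0) := by
    intro i
    rw [hBdef]
    calc ∏ k, M k ^ q ^ i.1 k * ((c k) ^ ((q:ℝ) ^ (i.1 k) - 1))⁻¹
        ≤ ∏ k, (c k * if k = k0 then τ ^ i.1 k0 else 1) := by
          refine Finset.prod_le_prod (fun k _ => mul_nonneg (pow_nonneg (hM0 k) _)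
            (inv_nonneg.mpr (Real.rpow_pos_of_pos (hc0 k) _).le)) (fun k _ => ?_)
          by_cases hk : k = k0
          · subst hk
            rw [if_pos rfl]
            exact fac_le2 q (i.1 k) hq2 (hM0 k) (hc0 k)
              (by rw [hτdef]; exact le_max_left _ _) hτ0 hτ1.le
          · rw [if_neg hk, mul_one]
            exact fac_le1 q (i.1 k) hq2 (hM0 k) (hc0 k) (hMc k)
      _ = (∏ k, c k) * τ ^ i.1 k0 := by
          rw [Finset.prod_mul_distrib, Finset.prod_ite_eq' Finset.univ k0
            (fun _ => τ ^ i.1 k0), if_pos (Finset.mem_univ _)]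
  have hBtend : Tendsto B cofinite (𝓝 0) := by
    have h1 : Tendsto (fun m : ℕ => (∏ k, c k) * τ ^ m) atTop (𝓝 0) := by
      have := (tendsto_pow_atTop_nhds_zero_of_lt_one hτ0.le hτ1).const_mul (∏ k, c k)
      simpa using this
    have h2 : Tendsto (fun i : {i : Fin r → ℕ // StrictAnti i} => i.1 k0) cofinite atTop := by
      rw [tendsto_atTop]
      intro N0
      rw [Filter.eventually_cofinite]
      have hsub : {i : {i : Fin r → ℕ // StrictAnti i} | ¬ N0 ≤ i.1 k0}
          ⊆ (fun i : {i : Fin r → ℕ // StrictAnti i} => i.1) ⁻¹'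
            (Set.pi Set.univ fun _ : Fin r => Set.Iio N0) := by
        intro i hi k _
        simp only [Set.mem_setOf_eq, not_le] at hi
        have hk0k : k0 ≤ k := by
          rw [hk0, Fin.le_def]
          exact Nat.zero_le _
        exact lt_of_le_of_lt (i.2.antitone hk0k) hi
      exact Set.Finite.subset
        (Set.Finite.preimage (Set.injOn_of_injective Subtype.val_injective)
          (Set.Finite.pi fun _ => Set.finite_Iio N0)) hsub
    exact tendsto_of_tendsto_of_tendsto_of_le_of_le tendsto_const_nhds
      (h1.comp h2) hB0 hBle
  -- summability criterion
  have hsummable : ∀ (T : {i : Fin r → ℕ // StrictAnti i} → PowerSeries F),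
      (∀ i d, ‖coeff d (T i)‖ ≤ B i) → Summable T := by
    intro T hT
    rw [ps_summable_iff]
    intro d
    apply NonarchimedeanAddGroup.summable_of_tendsto_cofinite_zero
    have : Tendsto (fun i : {i : Fin r → ℕ // StrictAnti i} => ‖coeff d (T i)‖)
        cofinite (𝓝 0) :=
      squeeze_zero (fun i => norm_nonneg _) (fun i => hT i d) hBtend
    exact tendsto_zero_iff_norm_tendsto_zero.mpr this
  -- part (a)
  have parta : ∀ j ∈ Fintype.piFinset (fun k => Finset.range (n k + 1)),
      Summable (fun i : {i : Fin r → ℕ // StrictAnti i} =>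
        polyLogTerm q θ s (fun k => u k (j k)) i.1) := by
    intro j hj
    refine hsummable _ (fun i d => ?_)
    rw [hBdef]
    unfold polyLogTerm
    exact coeff_prod_le Finset.univ _ _
      (fun k => hfaca k (j k)
        (Finset.mem_range.mp (Fintype.mem_piFinset.mp hj k)) (i.1 k)) d
  -- coefficients of P
  have hPcoeff : ∀ k m, (P k).coeff m = if m < n k + 1 then u k m else 0 := by
    intro k m
    rw [hP k]
    simp [Polynomial.finset_sum_coeff, Polynomial.coeff_C_mul, Polynomial.coeff_X_pow,
      Finset.sum_ite_eq, Finset.mem_range]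
  have hPdeg : ∀ k, (P k).natDegree ≤ n k := fun k =>
    Polynomial.natDegree_le_iff_coeff_eq_zero.mpr fun m hm => by
      rw [hPcoeff k m, if_neg (by omega)]
  -- the twisted polynomial as a power series
  have hptw : ∀ (k : Fin r) (i : ℕ),
      ((ptwist q i (P k) : Polynomial F) : PowerSeries F)
        = ∑ j ∈ Finset.range (n k + 1), C (u k j ^ q ^ i) * X ^ j := by
    intro k i
    ext d
    rw [Polynomial.coeff_coe]
    have hL : (ptwist q i (P k)).coeff d
        = if d < (P k).natDegree + 1 then (P k).coeff d ^ q ^ i else 0 := by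
      unfold ptwist
      rw [Polynomial.finset_sum_coeff]
      simp only [Polynomial.coeff_C_mul, Polynomial.coeff_X_pow, mul_ite, mul_one, mul_zero]
      rw [Finset.sum_ite_eq]
      simp [Finset.mem_range]
    have hR : coeff d (∑ j ∈ Finset.range (n k + 1), C (u k j ^ q ^ i) * X ^ j)
        = if d < n k + 1 then u k d ^ q ^ i else 0 := by
      rw [map_sum]
      simp only [PowerSeries.coeff_C_mul, PowerSeries.coeff_X_pow, mul_ite, mul_one, mul_zero]
      rw [Finset.sum_ite_eq]
      simp [Finset.mem_range]
    rw [hL, hR]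
    by_cases h1 : d < (P k).natDegree + 1
    · rw [if_pos h1, if_pos (by have := hPdeg k; omega), hPcoeff k d,
        if_pos (by have := hPdeg k; omega)]
    · rw [if_neg h1]
      by_cases h2 : d < n k + 1
      · rw [if_pos h2]
        have hz : u k d = 0 := by
          have h3 := hPcoeff k d
          rw [if_pos h2] at h3
          rw [← h3]
          exact Polynomial.coeff_eq_zero_of_natDegree_lt (by omega)
        rw [hz, zero_pow (pow_ne_zero _ (by omega : q ≠ 0))]
      · rw [if_neg h2]
  -- the algebraic decomposition of each term
  have hterm : ∀ i : {i : Fin r → ℕ // StrictAnti i},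
      (∏ k, ((ptwist q (i.1 k) (P k) : PowerSeries F) * (LL q θ (i.1 k) ^ s k)⁻¹))
        = ∑ j ∈ Fintype.piFinset (fun k => Finset.range (n k + 1)),
            (PowerSeries.X : PowerSeries F) ^ (∑ k, j k) *
              polyLogTerm q θ s (fun k => u k (j k)) i.1 := by
    intro i
    calc (∏ k, ((ptwist q (i.1 k) (P k) : PowerSeries F) * (LL q θ (i.1 k) ^ s k)⁻¹))
        = ∏ k, ∑ j ∈ Finset.range (n k + 1),
            (C (u k j ^ q ^ i.1 k) * X ^ j * (LL q θ (i.1 k) ^ s k)⁻¹) := by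
          refine Finset.prod_congr rfl fun k _ => ?_
          rw [hptw k (i.1 k), Finset.sum_mul]
      _ = ∑ j ∈ Fintype.piFinset (fun k => Finset.range (n k + 1)),
            ∏ k, (C (u k (j k) ^ q ^ i.1 k) * X ^ (j k) * (LL q θ (i.1 k) ^ s k)⁻¹) :=
          Finset.prod_univ_sum _ _
      _ = ∑ j ∈ Fintype.piFinset (fun k => Finset.range (n k + 1)),
            (PowerSeries.X : PowerSeries F) ^ (∑ k, j k) *
              polyLogTerm q θ s (fun k => u k (j k)) i.1 := by
          refine Finset.sum_congr rfl fun j _ => ?_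
          unfold polyLogTerm
          rw [← Finset.prod_pow_eq_pow_sum, ← Finset.prod_mul_distrib]
          exact Finset.prod_congr rfl fun k _ => by ring
  -- the key HasSum statement
  have hhs : HasSum (fun i : {i : Fin r → ℕ // StrictAnti i} =>
      ∏ k, ((ptwist q (i.1 k) (P k) : PowerSeries F) * (LL q θ (i.1 k) ^ s k)⁻¹))
      (∑ j ∈ Fintype.piFinset (fun k => Finset.range (n k + 1)),
        (PowerSeries.X : PowerSeries F) ^ (∑ k, j k) *
          ∑' i : {i : Fin r → ℕ // StrictAnti i},
            polyLogTerm q θ s (fun k => u k (j k)) i.1) := by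
    have h1 : ∀ j ∈ Fintype.piFinset (fun k => Finset.range (n k + 1)),
        HasSum (fun i : {i : Fin r → ℕ // StrictAnti i} =>
          (PowerSeries.X : PowerSeries F) ^ (∑ k, j k) *
            polyLogTerm q θ s (fun k => u k (j k)) i.1)
          ((PowerSeries.X : PowerSeries F) ^ (∑ k, j k) *
            ∑' i : {i : Fin r → ℕ // StrictAnti i},
              polyLogTerm q θ s (fun k => u k (j k)) i.1) :=
      fun j hj => ps_hasSum_mul_left _ (parta j hj).hasSum
    have h2 := ps_hasSum_finsetSum h1
    have he : (fun i : {i : Fin r → ℕ // StrictAnti i} =>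
        ∏ k, ((ptwist q (i.1 k) (P k) : PowerSeries F) * (LL q θ (i.1 k) ^ s k)⁻¹))
        = fun i => ∑ j ∈ Fintype.piFinset (fun k => Finset.range (n k + 1)),
            (PowerSeries.X : PowerSeries F) ^ (∑ k, j k) *
              polyLogTerm q θ s (fun k => u k (j k)) i.1 := funext hterm
    rw [he]
    exact h2
  exact ⟨parta, ⟨_, hhs⟩, hhs.tsum_eq⟩
end
end

section
/- Let 𝔰 = (s_1,…,s_r) be a tuple of positive integers and u = (u_1,…,u_r) ∈ F^r with |u_k| ≤ q^{s_k·q/(q−1)} for 1 ≤ k ≤ r−1 and |u_r| < q^{s_r·q/(q−1)}. Fix 1 ≤ i ≤ r. Then the family, indexed by pairs (n, (k_0,…,k_n)) where n ≥ 0 is an integer and i = k_0 ≤ k_1 ≤ ⋯ ≤ k_n ≤ r are integers, of elements Π_{m=0}^{n} Π_{k_m ≤ k < k_{m+1}} u_k^{q^m}·(𝕃_m^{s_k})^{−1} ∈ F[[t]] (with the convention k_{n+1} := r+1 and empty products equal 1) is summable in F[[t]] for the product topology, and its sum equals Σ over all integer tuples 0 ≤ m_i ≤ m_{i+1} ≤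 ⋯ ≤ m_r of u_i^{q^{m_i}}⋯u_r^{q^{m_r}}·(𝕃_{m_i}^{s_i}⋯𝕃_{m_r}^{s_r})^{−1}, i.e. the t-motivic Carlitz multiple star polylogarithm 𝔏i⋆_{(s_r,…,s_i),(u_r,…,u_i)} (whose defining family is likewise summable). (This is the summation identity Σ_{n≥0} β_{n,i} = (−1)^{r−i}·(−1)^{r−i}·𝔏i⋆ established in the proof of Theorem 3.3 (T:Logcoords) of the paper.) -/
open PowerSeries Filter Topology
open scoped ENNReal

noncomputable section

variable {F : Type*} [Field F]

/-- The term `Π_{m=0}^{n} Π_{k_m ≤ k < k_{m+1}} u_k^{q^m}·(𝕃_m^{s_k})⁻¹` attached to a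
weakly increasing chain `kc : Fin (n+1) → ℕ`, with the convention `k_{n+1} := r+1`;
empty products equal `1`. -/
def starChainProd (q : ℕ) (θ : F) (s : ℕ → ℕ) (u : ℕ → F) (r : ℕ) {n : ℕ}
    (kc : Fin (n + 1) → ℕ) : PowerSeries F :=
  ∏ m ∈ Finset.range (n + 1),
    ∏ k ∈ Finset.Ico (kc ⟨min m n, by omega⟩)
        (if h : m < n then kc ⟨m + 1, by omega⟩ else r + 1),
      PowerSeries.C (u k ^ q ^ m) * (LL q θ m ^ s k)⁻¹


section PSTop




section PS
variable {F : Type*} [Semiring F] [TopologicalSpace F]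

lemma psTop_isInducing :
    IsInducing (fun (φ : PowerSeries F) (n : ℕ) => (PowerSeries.coeff n φ)) := ⟨rfl⟩

lemma psHasSum_iff {ι : Type*} (f : ι → PowerSeries F) (φ : PowerSeries F) :
    HasSum f φ ↔ ∀ d, HasSum (fun x => PowerSeries.coeff d (f x)) (PowerSeries.coeff d φ) := by
  rw [← Pi.hasSum (f := fun x (d : ℕ) => PowerSeries.coeff d (f x))
      (g := fun d => PowerSeries.coeff d φ)]
  rw [HasSum, HasSum, psTop_isInducing.tendsto_nhds_iff]
  apply Filter.tendsto_congr
  intro S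
  funext d
  simp [Function.comp, map_sum]

lemma psSummable_iff {ι : Type*} (f : ι → PowerSeries F) :
    Summable f ↔ ∀ d, Summable fun x => PowerSeries.coeff d (f x) := by
  constructor
  · rintro ⟨φ, hφ⟩ d; exact ⟨_, (psHasSum_iff f φ).1 hφ d⟩
  · intro h
    refine ⟨PowerSeries.mk fun d => ∑' x, PowerSeries.coeff d (f x), ?_⟩
    rw [psHasSum_iff]
    intro d
    simpa using (h d).hasSum

end PS

end PSTop

section Inv
variable {F : Type*} [Field F]

lemma ps_prod_inv {ι : Type*} (S : Finset ι) (f : ι → PowerSeries F) :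
    (∏ j ∈ S, f j)⁻¹ = ∏ j ∈ S, (f j)⁻¹ := by
  induction S using Finset.cons_induction with
  | empty => simp
  | cons j S hj ih =>
      rw [Finset.prod_cons, Finset.prod_cons, PowerSeries.mul_inv_rev, ih, mul_comm]

lemma ps_pow_inv (f : PowerSeries F) (n : ℕ) : (f ^ n)⁻¹ = (f⁻¹) ^ n := by
  have := ps_prod_inv (Finset.range n) (fun _ => f)
  simpa using this

lemma X_sub_C_inv (a : F) (ha : a ≠ 0) :
    ((PowerSeries.X : PowerSeries F) - PowerSeries.C a)⁻¹
      = -invUnitsSub (Units.mk0 a ha) := by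
  have h : constantCoeff (X - C a) ≠ 0 := by simp [ha]
  rw [PowerSeries.inv_eq_iff_mul_eq_one h]
  have h2 := invUnitsSub_mul_sub (Units.mk0 a ha)
  have : (C ((Units.mk0 a ha) : F)) = C a := rfl
  rw [this] at h2
  linear_combination h2

lemma coeff_X_sub_C_inv (a : F) (ha : a ≠ 0) (d : ℕ) :
    PowerSeries.coeff d ((PowerSeries.X - PowerSeries.C a)⁻¹) = -(a⁻¹ ^ (d + 1)) := by
  rw [X_sub_C_inv a ha, map_neg, coeff_invUnitsSub, one_divp]
  norm_cast

end Inv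

section Norm
variable {F : Type*} [NormedField F]

lemma norm_coeff_X_sub_C_inv (a : F) (ha : a ≠ 0) (d : ℕ) :
    ‖PowerSeries.coeff d ((PowerSeries.X - PowerSeries.C a)⁻¹)‖ = (‖a‖ ^ (d + 1))⁻¹ := by
  rw [coeff_X_sub_C_inv a ha, norm_neg, norm_pow, norm_inv, inv_pow]

lemma norm_coeff_X_sub_C_inv_le (a : F) (ha : 1 ≤ ‖a‖) (d : ℕ) :
    ‖PowerSeries.coeff d ((PowerSeries.X - PowerSeries.C a)⁻¹)‖ ≤ ‖a‖⁻¹ := by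
  have ha0 : a ≠ 0 := by rintro rfl; simp at ha; linarith
  rw [norm_coeff_X_sub_C_inv a ha0 d]
  rw [inv_le_inv₀ (by positivity) (by positivity)]
  calc ‖a‖ = ‖a‖ ^ 1 := (pow_one _).symm
  _ ≤ ‖a‖ ^ (d+1) := pow_le_pow_right₀ ha (by omega)

end Norm

section Norm
variable {F : Type*} [NormedField F] [IsUltrametricDist F]

lemma norm_coeff_prod_le {ι : Type*} (f : ι → PowerSeries F) (Cb : ι → ℝ)
    (h0 : ∀ j, 0 ≤ Cb j) (h : ∀ j e, ‖PowerSeries.coeff e (f j)‖ ≤ Cb j)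
    (S : Finset ι) (d : ℕ) :
    ‖PowerSeries.coeff d (∏ j ∈ S, f j)‖ ≤ ∏ j ∈ S, Cb j := by
  induction S using Finset.cons_induction generalizing d with
  | empty =>
      simp only [Finset.prod_empty, PowerSeries.coeff_one]
      split <;> simp
  | cons j S hj ih =>
      rw [Finset.prod_cons, Finset.prod_cons, PowerSeries.coeff_mul]
      apply IsUltrametricDist.norm_sum_le_of_forall_le_of_nonneg
      · exact mul_nonneg (h0 j) (Finset.prod_nonneg fun x _ => h0 x)
      · rintro ⟨x, y⟩ _
        rw [norm_mul]
        exact mul_le_mul (h j x) (ih y) (norm_nonneg _) (h0 j)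

lemma norm_coeff_pow_le (f : PowerSeries F) (Cb : ℝ) (h0 : 0 ≤ Cb)
    (h : ∀ e, ‖PowerSeries.coeff e f‖ ≤ Cb) (n : ℕ) (d : ℕ) :
    ‖PowerSeries.coeff d (f ^ n)‖ ≤ Cb ^ n := by
  have := norm_coeff_prod_le (fun _ : ℕ => f) (fun _ => Cb) (fun _ => h0)
    (fun _ => h) (Finset.range n) d
  simpa using this

lemma norm_coeff_LL_pow_inv (q : ℕ) (hq : 2 ≤ q) (θ : F) (hθ : ‖θ‖ = (q : ℝ))
    (m sk d : ℕ) :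
    ‖PowerSeries.coeff d ((LL q θ m ^ sk)⁻¹)‖
      ≤ ((q : ℝ) ^ (sk * ∑ j ∈ Finset.range m, q ^ (j + 1)))⁻¹ := by
  have hθ0 : θ ≠ 0 := by
    rintro rfl
    rw [norm_zero] at hθ
    have : q = 0 := by exact_mod_cast hθ.symm
    omega
  have hq1 : (1:ℝ) ≤ (q:ℝ) := by exact_mod_cast Nat.one_le_of_lt hq
  have key : (LL q θ m ^ sk)⁻¹
      = ∏ j ∈ Finset.range m, ((PowerSeries.X - PowerSeries.C (θ ^ q ^ (j+1)))⁻¹) ^ sk := by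
    rw [LL, ← Finset.prod_pow, ps_prod_inv]
    exact Finset.prod_congr rfl fun j _ => ps_pow_inv _ _
  rw [key]
  have hbound : ∀ j e, ‖PowerSeries.coeff e
      (((PowerSeries.X - PowerSeries.C (θ ^ q ^ (j+1)))⁻¹) ^ sk)‖
      ≤ (((q:ℝ) ^ q ^ (j+1))⁻¹) ^ sk := by
    intro j e
    apply norm_coeff_pow_le _ _ (by positivity)
    intro e'
    have h1 : (1:ℝ) ≤ ‖θ ^ q ^ (j+1)‖ := by
      rw [norm_pow, hθ]; exact one_le_pow₀ hq1
    have := norm_coeff_X_sub_C_inv_le (θ ^ q ^ (j+1)) h1 e'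
    rwa [norm_pow, hθ] at this
  calc ‖PowerSeries.coeff d (∏ j ∈ Finset.range m,
        ((PowerSeries.X - PowerSeries.C (θ ^ q ^ (j+1)))⁻¹) ^ sk)‖
      ≤ ∏ j ∈ Finset.range m, (((q:ℝ) ^ q ^ (j+1))⁻¹) ^ sk :=
        norm_coeff_prod_le _ _ (fun j => by positivity) hbound _ d
    _ = ((q : ℝ) ^ (sk * ∑ j ∈ Finset.range m, q ^ (j + 1)))⁻¹ := by
        simp only [← inv_pow, ← pow_mul]
        rw [Finset.prod_pow_eq_pow_sum, ← Finset.sum_mul, mul_comm]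
end Norm

lemma hE_lemma (q : ℕ) (m : ℕ) :
    ((∑ j ∈ Finset.range m, q ^ (j+1) : ℕ) : ℝ) * ((q:ℝ) - 1) = (q:ℝ) ^ (m+1) - q := by
  push_cast
  simp only [pow_succ']
  rw [← Finset.mul_sum]
  linear_combination (q:ℝ) * geom_sum_mul (q:ℝ) m

lemma keyIdent (q : ℕ) (hq : 2 ≤ q) (sk m : ℕ) :
    ((q:ℝ) ^ ((sk:ℝ) * q / ((q:ℝ) - 1))) ^ (q ^ m)
      * ((q:ℝ) ^ (sk * ∑ j ∈ Finset.range m, q ^ (j+1)))⁻¹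
    = (q:ℝ) ^ ((sk:ℝ) * q / ((q:ℝ) - 1)) := by
  have hq0 : (0:ℝ) < q := by
    have : (2:ℝ) ≤ q := by exact_mod_cast hq
    linarith
  have hq1 : (q:ℝ) - 1 ≠ 0 := by
    have : (2:ℝ) ≤ q := by exact_mod_cast hq
    intro h; linarith
  set x : ℝ := (sk:ℝ) * q / ((q:ℝ) - 1) with hx
  rw [← Real.rpow_natCast ((q:ℝ) ^ x) (q ^ m), ← Real.rpow_natCast (q:ℝ) (sk * _),
    ← Real.rpow_mul hq0.le, ← Real.rpow_neg hq0.le, ← Real.rpow_add hq0]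
  congr 1
  have hE := hE_lemma q m
  push_cast at hE ⊢
  rw [hx]
  field_simp
  linear_combination -(sk:ℝ) * hE

section Comb

lemma mono_filter_iff {M : ℕ} {f : Fin M → ℕ} (hf : Monotone f) {P : ℕ → Prop}
    [DecidablePred P] (hP : ∀ ⦃a b : ℕ⦄, a ≤ b → P b → P a) (k : Fin M) :
    P (f k) ↔ (k : ℕ) < (Finset.univ.filter fun x => P (f x)).card := by
  constructor
  · intro h
    have hsub : Finset.Iic k ⊆ Finset.univ.filter fun x => P (f x) := by
      intro x hx
      rw [Finset.mem_Iic] at hx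
      simp only [Finset.mem_filter, Finset.mem_univ, true_and]
      exact hP (hf hx) h
    have := Finset.card_le_card hsub
    rw [Fin.card_Iic] at this
    omega
  · intro h
    by_contra hc
    have hsub : (Finset.univ.filter fun x => P (f x)) ⊆ Finset.Iio k := by
      intro x hx
      simp only [Finset.mem_filter, Finset.mem_univ, true_and] at hx
      rw [Finset.mem_Iio]
      by_contra hxk
      exact hc (hP (hf (le_of_not_gt hxk)) hx)
    have := Finset.card_le_card hsub
    rw [Fin.card_Iio] at this
    omega

/-- `toMc i kc k` is the largest `m` with `kc m ≤ i + k`. -/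
def toMc {n : ℕ} (i : ℕ) (kc : Fin (n + 1) → ℕ) (k : ℕ) : ℕ :=
  (Finset.univ.filter fun m : Fin (n + 1) => kc m ≤ i + k).card - 1

lemma toMc_card_pos {n : ℕ} {i : ℕ} {kc : Fin (n + 1) → ℕ} (h0 : kc 0 = i) (k : ℕ) :
    1 ≤ (Finset.univ.filter fun m : Fin (n + 1) => kc m ≤ i + k).card :=
  Finset.card_pos.mpr ⟨0, by simp [h0]⟩

lemma toMc_lt_iff {n : ℕ} {i : ℕ} {kc : Fin (n + 1) → ℕ} (hkc : Monotone kc)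
    (h0 : kc 0 = i) (k : ℕ) (m : Fin (n + 1)) :
    toMc i kc k < (m : ℕ) ↔ i + k < kc m := by
  have hiff := mono_filter_iff hkc (P := fun a => a ≤ i + k)
    (fun a b hab hb => le_trans hab hb) m
  have hpos := toMc_card_pos h0 k
  unfold toMc
  omega

lemma toMc_le {n : ℕ} (i : ℕ) (kc : Fin (n + 1) → ℕ) (k : ℕ) : toMc i kc k ≤ n := by
  unfold toMc
  have := Finset.card_filter_le (Finset.univ : Finset (Fin (n + 1)))
    (fun m => kc m ≤ i + k)
  rw [Finset.card_univ, Fintype.card_fin] at this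
  omega

lemma toMc_last {n : ℕ} {i r : ℕ} {kc : Fin (n + 1) → ℕ} (hle : ∀ m, kc m ≤ r)
    (hir : i ≤ r) : toMc i kc (r - i) = n := by
  unfold toMc
  have hfull : (Finset.univ.filter fun m : Fin (n + 1) => kc m ≤ i + (r - i))
      = Finset.univ :=
    Finset.filter_true_of_mem fun m _ => by have := hle m; omega
  rw [hfull, Finset.card_univ, Fintype.card_fin]
  omega

lemma toMc_mono {n : ℕ} (i : ℕ) (kc : Fin (n + 1) → ℕ) : Monotone (toMc i kc) := by
  intro k k' h
  unfold toMc
  have hsub : (Finset.univ.filter fun m : Fin (n + 1) => kc m ≤ i + k)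
      ⊆ Finset.univ.filter fun m : Fin (n + 1) => kc m ≤ i + k' :=
    Finset.monotone_filter_right _ (fun m hm => by omega)
  have := Finset.card_le_card hsub
  omega

/-- the chain attached to a monotone tuple -/
def mcKc {L : ℕ} (i : ℕ) (mc : Fin L → ℕ) (m : ℕ) : ℕ :=
  i + (Finset.univ.filter fun k : Fin L => mc k < m).card

lemma mcKc_le_iff {L : ℕ} {i : ℕ} {mc : Fin L → ℕ} (hmc : Monotone mc) (m : ℕ)
    (k : Fin L) : mcKc i mc m ≤ i + (k : ℕ) ↔ m ≤ mc k := by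
  have := mono_filter_iff hmc (P := fun a => a < m)
    (fun a b hab hb => lt_of_le_of_lt hab hb) k
  unfold mcKc
  omega

def chainToMono (i r : ℕ)
    (p : Σ n : ℕ, {kc : Fin (n + 1) → ℕ // Monotone kc ∧ kc 0 = i ∧ ∀ m, kc m ≤ r}) :
    {mc : Fin (r + 1 - i) → ℕ // Monotone mc} :=
  ⟨fun k => toMc i p.2.1 (k : ℕ), fun a b hab => toMc_mono i p.2.1 hab⟩

lemma chainToMono_injective (i r : ℕ) (hir : i ≤ r) :
    Function.Injective (chainToMono i r) := by
  have key : ∀ (n : ℕ) (kc kc' : Fin (n + 1) → ℕ), Monotone kc → kc 0 = i →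
      (∀ m, kc m ≤ r) → Monotone kc' → kc' 0 = i → (∀ m, kc' m ≤ r) →
      (∀ k : Fin (r + 1 - i), toMc i kc (k : ℕ) = toMc i kc' (k : ℕ)) →
      ∀ m, kc m ≤ kc' m := by
    intro n kc kc' hkc h0 hle hkc' h0' hle' heq m
    by_contra hgt
    push_neg at hgt
    have hik : i ≤ kc' m := h0' ▸ hkc' (Fin.zero_le m)
    have hkr : kc' m ≤ r := hle' m
    have hkfin : kc' m - i < r + 1 - i := by omega
    have d1 := toMc_lt_iff hkc h0 (kc' m - i) m
    have d2 := toMc_lt_iff hkc' h0' (kc' m - i) m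
    have he := heq ⟨kc' m - i, hkfin⟩
    simp only at he
    omega
  rintro ⟨n, kc, hkc, h0, hle⟩ ⟨n', kc', hkc', h0', hle'⟩ h
  have hL : r - i < r + 1 - i := by omega
  have hval : ∀ k : Fin (r + 1 - i), toMc i kc (k : ℕ) = toMc i kc' (k : ℕ) := by
    intro k
    exact congrFun (congrArg Subtype.val h) k
  have hn : n = n' := by
    have := hval ⟨r - i, hL⟩
    rwa [toMc_last hle hir, toMc_last hle' hir] at this
  subst hn
  have hkceq : kc = kc' := by
    funext m
    exact le_antisymm (key n kc kc' hkc h0 hle hkc' h0' hle' hval m)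
      (key n kc' kc hkc' h0' hle' hkc h0 hle (fun k => (hval k).symm) m)
  subst hkceq
  rfl

lemma chainToMono_surjective (i r : ℕ) (hir : i ≤ r) :
    Function.Surjective (chainToMono i r) := by
  rintro ⟨mc, hmc⟩
  have hL : r - i < r + 1 - i := by omega
  set lastI : Fin (r + 1 - i) := ⟨r - i, hL⟩ with hlastI
  set n := mc lastI with hn
  have hmlast : ∀ k, mc k ≤ n := by
    intro k
    apply hmc
    rw [Fin.le_def]
    have := k.2
    simp only [hlastI]
    omega
  have hkc0 : mcKc i mc 0 = i := by
    unfold mcKc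
    simp
  have hkcle : ∀ m : Fin (n + 1), mcKc i mc (m : ℕ) ≤ r := by
    intro m
    have hnot : lastI ∉ Finset.univ.filter fun k : Fin (r + 1 - i) => mc k < (m : ℕ) := by
      simp only [Finset.mem_filter, Finset.mem_univ, true_and, not_lt]
      have := m.2
      omega
    have hsub : (Finset.univ.filter fun k : Fin (r + 1 - i) => mc k < (m : ℕ))
        ⊆ Finset.univ.erase lastI := by
      intro x hx
      rw [Finset.mem_erase]
      exact ⟨fun hxe => hnot (hxe ▸ hx), Finset.mem_univ x⟩
    have hcard := Finset.card_le_card hsub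
    rw [Finset.card_erase_of_mem (Finset.mem_univ _), Finset.card_univ, Fintype.card_fin]
      at hcard
    unfold mcKc
    omega
  have hkcmono : Monotone fun m : Fin (n + 1) => mcKc i mc (m : ℕ) := by
    intro a b hab
    simp only
    unfold mcKc
    have hab' : (a : ℕ) ≤ (b : ℕ) := hab
    have hsub : (Finset.univ.filter fun k : Fin (r + 1 - i) => mc k < (a : ℕ))
        ⊆ Finset.univ.filter fun k : Fin (r + 1 - i) => mc k < (b : ℕ) :=
      Finset.monotone_filter_right _ (fun x hx => by omega)
    have := Finset.card_le_card hsub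
    omega
  refine ⟨⟨n, fun m => mcKc i mc (m : ℕ), hkcmono, hkc0, hkcle⟩, ?_⟩
  apply Subtype.ext
  funext k
  show toMc i (fun m : Fin (n + 1) => mcKc i mc (m : ℕ)) (k : ℕ) = mc k
  unfold toMc
  have hmk : mc k < n + 1 := by have := hmlast k; omega
  have hfe : (Finset.univ.filter fun m : Fin (n + 1) => mcKc i mc (m : ℕ) ≤ i + (k : ℕ))
      = Finset.Iic (⟨mc k, hmk⟩ : Fin (n + 1)) := by
    ext m
    simp only [Finset.mem_filter, Finset.mem_univ, true_and, Finset.mem_Iic, Fin.le_def]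
    rw [mcKc_le_iff hmc]
  rw [hfe, Fin.card_Iic]
  simp

end Comb

lemma starChainProd_eq {F : Type*} [Field F] (q : ℕ) (θ : F) (s : ℕ → ℕ) (u : ℕ → F)
    (i r : ℕ) (hir : i ≤ r) {n : ℕ} (kc : Fin (n + 1) → ℕ)
    (hkc : Monotone kc) (h0 : kc 0 = i) (hle : ∀ m, kc m ≤ r) :
    starChainProd q θ s u r kc
      = ∏ k : Fin (r + 1 - i),
          PowerSeries.C (u (i + (k : ℕ)) ^ q ^ toMc i kc (k : ℕ))
            * (LL q θ (toMc i kc (k : ℕ)) ^ s (i + (k : ℕ)))⁻¹ := by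
  unfold starChainProd
  rw [← Finset.prod_fiberwise_of_maps_to
        (t := Finset.range (n + 1))
        (g := fun k : Fin (r + 1 - i) => toMc i kc (k : ℕ))
        (fun k _ => Finset.mem_range.mpr (by simpa using Nat.lt_succ_of_le (toMc_le i kc (k : ℕ))))
        (fun k : Fin (r + 1 - i) =>
          PowerSeries.C (u (i + (k : ℕ)) ^ q ^ toMc i kc (k : ℕ))
            * (LL q θ (toMc i kc (k : ℕ)) ^ s (i + (k : ℕ)))⁻¹)]
  refine Finset.prod_congr rfl (fun m hm => ?_)
  rw [Finset.mem_range] at hm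
  have hmn : m ≤ n := by omega
  simp only [Nat.min_eq_left hmn]
  have hright : (∏ k ∈ Finset.univ.filter (fun k : Fin (r + 1 - i) => toMc i kc (k : ℕ) = m),
        (PowerSeries.C (u (i + (k : ℕ)) ^ q ^ toMc i kc (k : ℕ))
          * (LL q θ (toMc i kc (k : ℕ)) ^ s (i + (k : ℕ)))⁻¹))
      = ∏ k ∈ Finset.univ.filter (fun k : Fin (r + 1 - i) => toMc i kc (k : ℕ) = m),
        (PowerSeries.C (u (i + (k : ℕ)) ^ q ^ m)
          * (LL q θ m ^ s (i + (k : ℕ)))⁻¹) := by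
    refine Finset.prod_congr rfl (fun k hk => ?_)
    rw [(Finset.mem_filter.mp hk).2]
  rw [hright]
  by_cases hlt : m < n
  · rw [dif_pos hlt]
    refine Finset.prod_bij' (fun κ hκ => (⟨κ - i, ?_⟩ : Fin (r + 1 - i)))
      (fun k _ => i + (k : ℕ)) ?_ ?_ ?_ ?_ ?_
    · -- κ - i < r + 1 - i
      rw [Finset.mem_Ico] at hκ
      have := hle ⟨m + 1, by omega⟩
      omega
    · -- mem filter
      intro κ hκ
      beta_reduce
      rw [Finset.mem_Ico] at hκ
      simp only [Finset.mem_filter, Finset.mem_univ, true_and]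
      have hiκ : i ≤ κ := le_trans (by rw [← h0]; exact hkc (Fin.zero_le _)) hκ.1
      have d1 := toMc_lt_iff hkc h0 (κ - i) ⟨m, by omega⟩
      have d2 := toMc_lt_iff hkc h0 (κ - i) ⟨m + 1, by omega⟩
      simp only at d1 d2
      omega
    · -- mem Ico
      intro k hk
      beta_reduce
      rw [Finset.mem_filter] at hk
      rw [Finset.mem_Ico]
      have d1 := toMc_lt_iff hkc h0 (k : ℕ) ⟨m, by omega⟩
      have d2 := toMc_lt_iff hkc h0 (k : ℕ) ⟨m + 1, by omega⟩
      simp only at d1 d2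
      omega
    · -- left inv
      intro κ hκ
      beta_reduce
      rw [Finset.mem_Ico] at hκ
      have hiκ : i ≤ κ := le_trans (by rw [← h0]; exact hkc (Fin.zero_le _)) hκ.1
      simp only
      omega
    · -- right inv
      intro k hk
      beta_reduce
      apply Fin.ext
      simp only
      omega
    · -- factor equality
      intro κ hκ
      beta_reduce
      rw [Finset.mem_Ico] at hκ
      have hiκ : i ≤ κ := le_trans (by rw [← h0]; exact hkc (Fin.zero_le _)) hκ.1
      have : i + (κ - i) = κ := by omega
      simp only [this]
  · rw [dif_neg hlt]
    have hmn2 : m = n := by omega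
    refine Finset.prod_bij' (fun κ hκ => (⟨κ - i, ?_⟩ : Fin (r + 1 - i)))
      (fun k _ => i + (k : ℕ)) ?_ ?_ ?_ ?_ ?_
    · rw [Finset.mem_Ico] at hκ
      omega
    · intro κ hκ
      beta_reduce
      rw [Finset.mem_Ico] at hκ
      simp only [Finset.mem_filter, Finset.mem_univ, true_and]
      have hiκ : i ≤ κ := le_trans (by rw [← h0]; exact hkc (Fin.zero_le _)) hκ.1
      have d1 := toMc_lt_iff hkc h0 (κ - i) ⟨m, by omega⟩
      have d3 := toMc_le i kc (κ - i)
      simp only at d1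
      omega
    · intro k hk
      beta_reduce
      rw [Finset.mem_filter] at hk
      rw [Finset.mem_Ico]
      have d1 := toMc_lt_iff hkc h0 (k : ℕ) ⟨m, by omega⟩
      simp only at d1
      have hk2 := k.2
      omega
    · intro κ hκ
      beta_reduce
      rw [Finset.mem_Ico] at hκ
      have hiκ : i ≤ κ := le_trans (by rw [← h0]; exact hkc (Fin.zero_le _)) hκ.1
      simp only
      omega
    · intro k hk
      beta_reduce
      apply Fin.ext
      simp only
      omega
    · intro κ hκ
      beta_reduce
      rw [Finset.mem_Ico] at hκ
      have hiκ : i ≤ κ := le_trans (by rw [← h0]; exact hkc (Fin.zero_le _)) hκ.1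
      have : i + (κ - i) = κ := by omega
      simp only [this]

section Factors
variable {F : Type*} [NormedField F] [IsUltrametricDist F]

lemma factor_norm_le (q : ℕ) (hq2 : 2 ≤ q) (θ : F) (hθ : ‖θ‖ = (q : ℝ))
    (uk : F) (sk m e : ℕ) :
    ‖PowerSeries.coeff e (PowerSeries.C (uk ^ q ^ m) * (LL q θ m ^ sk)⁻¹)‖
      ≤ ‖uk‖ ^ q ^ m * ((q : ℝ) ^ (sk * ∑ j ∈ Finset.range m, q ^ (j + 1)))⁻¹ := by
  rw [PowerSeries.coeff_C_mul, norm_mul, norm_pow]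
  exact mul_le_mul_of_nonneg_left (norm_coeff_LL_pow_inv q hq2 θ hθ m sk e) (by positivity)

lemma factor_norm_le_mid (q : ℕ) (hq2 : 2 ≤ q) (θ : F) (hθ : ‖θ‖ = (q : ℝ))
    (uk : F) (sk m e : ℕ)
    (huk : ‖uk‖ ≤ (q : ℝ) ^ ((sk : ℝ) * (q : ℝ) / ((q : ℝ) - 1))) :
    ‖PowerSeries.coeff e (PowerSeries.C (uk ^ q ^ m) * (LL q θ m ^ sk)⁻¹)‖
      ≤ (q : ℝ) ^ ((sk : ℝ) * (q : ℝ) / ((q : ℝ) - 1)) := by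
  refine le_trans (factor_norm_le q hq2 θ hθ uk sk m e) ?_
  calc ‖uk‖ ^ q ^ m * ((q : ℝ) ^ (sk * ∑ j ∈ Finset.range m, q ^ (j + 1)))⁻¹
      ≤ ((q : ℝ) ^ ((sk : ℝ) * (q : ℝ) / ((q : ℝ) - 1))) ^ q ^ m
          * ((q : ℝ) ^ (sk * ∑ j ∈ Finset.range m, q ^ (j + 1)))⁻¹ := by
        apply mul_le_mul_of_nonneg_right (pow_le_pow_left₀ (norm_nonneg _) huk _)
        positivity
    _ = (q : ℝ) ^ ((sk : ℝ) * (q : ℝ) / ((q : ℝ) - 1)) := keyIdent q hq2 sk m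

lemma factor_norm_le_last (q : ℕ) (hq2 : 2 ≤ q) (θ : F) (hθ : ‖θ‖ = (q : ℝ))
    (uk : F) (sk m e : ℕ) :
    ‖PowerSeries.coeff e (PowerSeries.C (uk ^ q ^ m) * (LL q θ m ^ sk)⁻¹)‖
      ≤ (q : ℝ) ^ ((sk : ℝ) * (q : ℝ) / ((q : ℝ) - 1))
        * (‖uk‖ / (q : ℝ) ^ ((sk : ℝ) * (q : ℝ) / ((q : ℝ) - 1))) ^ q ^ m := by
  refine le_trans (factor_norm_le q hq2 θ hθ uk sk m e) (le_of_eq ?_)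
  have hx : (0 : ℝ) < (q : ℝ) ^ ((sk : ℝ) * (q : ℝ) / ((q : ℝ) - 1)) :=
    Real.rpow_pos_of_pos (by positivity) _
  have huk : ‖uk‖ = (‖uk‖ / (q : ℝ) ^ ((sk : ℝ) * (q : ℝ) / ((q : ℝ) - 1)))
      * (q : ℝ) ^ ((sk : ℝ) * (q : ℝ) / ((q : ℝ) - 1)) := by
    field_simp
  have hcn : (((q : ℝ) ^ ((sk : ℝ) * (q : ℝ) / ((q : ℝ) - 1))) ^ q ^ m) ≠ 0 := by
    positivity
  have h2 : ((q : ℝ) ^ (sk * ∑ j ∈ Finset.range m, q ^ (j + 1)))⁻¹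
      = (q : ℝ) ^ ((sk : ℝ) * (q : ℝ) / ((q : ℝ) - 1))
        / ((q : ℝ) ^ ((sk : ℝ) * (q : ℝ) / ((q : ℝ) - 1))) ^ q ^ m := by
    rw [eq_div_iff hcn, mul_comm]
    exact keyIdent q hq2 sk m
  rw [h2, div_pow]
  ring

end Factors


/-- summation identity `Σ_{n≥0} β_{n,i} = 𝔏i⋆` in the proof of
Theorem 3.3 of the paper.  The family indexed by pairs `(n, (k_0,…,k_n))` with
`i = k_0 ≤ k_1 ≤ ⋯ ≤ k_n ≤ r` of the elements
`Π_{m=0}^{n} Π_{k_m ≤ k < k_{m+1}} u_k^{q^m}(𝕃_m^{s_k})⁻¹` (with `k_{n+1} := r+1`) is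
summable in `F[[t]]`, with sum the t-motivic Carlitz multiple star polylogarithm
`𝔏i⋆_{(s_r,…,s_i),(u_r,…,u_i)} = Σ_{0 ≤ m_i ≤ ⋯ ≤ m_r} Π_{k=i}^{r} u_k^{q^{m_k}}(𝕃_{m_k}^{s_k})⁻¹`,
whose defining family is likewise summable. -/
theorem statement5
    {F : Type*} [NormedField F] [IsUltrametricDist F] [CompleteSpace F]
    (q : ℕ) (hq : IsPrimePow q) (θ : F) (hθ : ‖θ‖ = (q : ℝ))
    (r : ℕ) (hr : 1 ≤ r) (s : ℕ → ℕ) (hs : ∀ k, 1 ≤ k → k ≤ r → 0 < s k)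
    (u : ℕ → F)
    (hu : ∀ k, 1 ≤ k → k ≤ r - 1 → ‖u k‖ ≤ (q : ℝ) ^ ((s k : ℝ) * (q : ℝ) / ((q : ℝ) - 1)))
    (hur : ‖u r‖ < (q : ℝ) ^ ((s r : ℝ) * (q : ℝ) / ((q : ℝ) - 1)))
    (i : ℕ) (hi1 : 1 ≤ i) (hir : i ≤ r) :
    Summable (fun p : Σ n : ℕ,
        {kc : Fin (n + 1) → ℕ // Monotone kc ∧ kc 0 = i ∧ ∀ m, kc m ≤ r} =>
      starChainProd q θ s u r p.2.1)
    ∧ Summable (fun mc : {mc : Fin (r + 1 - i) → ℕ // Monotone mc} =>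
        ∏ k : Fin (r + 1 - i),
          PowerSeries.C (u (i + (k : ℕ)) ^ q ^ mc.1 k) * (LL q θ (mc.1 k) ^ s (i + (k : ℕ)))⁻¹)
    ∧ (∑' p : Σ n : ℕ,
          {kc : Fin (n + 1) → ℕ // Monotone kc ∧ kc 0 = i ∧ ∀ m, kc m ≤ r},
          starChainProd q θ s u r p.2.1)
        = ∑' mc : {mc : Fin (r + 1 - i) → ℕ // Monotone mc},
            ∏ k : Fin (r + 1 - i),
              PowerSeries.C (u (i + (k : ℕ)) ^ q ^ mc.1 k)
                * (LL q θ (mc.1 k) ^ s (i + (k : ℕ)))⁻¹ := by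
  have hq2 : 2 ≤ q := hq.two_le
  have hQ2 : (2 : ℝ) ≤ (q : ℝ) := by exact_mod_cast hq2
  have hlast : r - i < r + 1 - i := by omega
  set lastI : Fin (r + 1 - i) := ⟨r - i, hlast⟩ with hlastI
  set c : ℕ → ℝ := fun κ => (q : ℝ) ^ ((s κ : ℝ) * (q : ℝ) / ((q : ℝ) - 1)) with hc
  have hcpos : ∀ κ, 0 < c κ := fun κ => Real.rpow_pos_of_pos (by linarith) _
  set ρ : ℝ := ‖u r‖ / c r with hρ
  have hρ0 : 0 ≤ ρ := div_nonneg (norm_nonneg _) (hcpos r).le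
  have hρ1 : ρ < 1 := (div_lt_one (hcpos r)).mpr hur
  set G : {mc : Fin (r + 1 - i) → ℕ // Monotone mc} → PowerSeries F := fun mc =>
    ∏ k : Fin (r + 1 - i),
      PowerSeries.C (u (i + (k : ℕ)) ^ q ^ mc.1 k) * (LL q θ (mc.1 k) ^ s (i + (k : ℕ)))⁻¹
    with hG
  set K : ℝ := ∏ k : Fin (r + 1 - i), c (i + (k : ℕ)) with hK
  have hKpos : 0 < K := Finset.prod_pos (fun k _ => hcpos _)
  -- the coefficientwise bound
  have hbound : ∀ (x : {mc : Fin (r + 1 - i) → ℕ // Monotone mc}) (d : ℕ),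
      ‖PowerSeries.coeff d (G x)‖ ≤ K * ρ ^ q ^ x.1 lastI := by
    intro x d
    have h1 : ‖PowerSeries.coeff d (G x)‖
        ≤ ∏ k : Fin (r + 1 - i),
            (c (i + (k : ℕ)) * if k = lastI then ρ ^ q ^ x.1 k else 1) := by
      refine norm_coeff_prod_le
        (fun k : Fin (r + 1 - i) =>
          PowerSeries.C (u (i + (k : ℕ)) ^ q ^ x.1 k)
            * (LL q θ (x.1 k) ^ s (i + (k : ℕ)))⁻¹)
        _ ?_ ?_ Finset.univ d
      · intro k
        apply mul_nonneg (hcpos _).le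
        split
        · positivity
        · norm_num
      · intro k e
        beta_reduce
        by_cases hk : k = lastI
        · rw [if_pos hk, hk]
          have hκ : i + ((lastI : Fin (r + 1 - i)) : ℕ) = r := by
            simp only [hlastI]
            omega
          rw [hκ]
          have hcr : c r = (q : ℝ) ^ ((s r : ℝ) * (q : ℝ) / ((q : ℝ) - 1)) := rfl
          rw [hρ, hcr]
          exact factor_norm_le_last q hq2 θ hθ (u r) (s r) (x.1 lastI) e
        · rw [if_neg hk, mul_one]
          have hκne : (k : ℕ) ≠ r - i := fun h => hk (Fin.ext (by simp [hlastI, h]))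
          have hk2 := k.2
          have hκ1 : 1 ≤ i + (k : ℕ) := by omega
          have hκ2 : i + (k : ℕ) ≤ r - 1 := by omega
          exact factor_norm_le_mid q hq2 θ hθ (u (i + (k : ℕ))) (s (i + (k : ℕ)))
            (x.1 k) e (hu _ hκ1 hκ2)
    refine le_trans h1 (le_of_eq ?_)
    rw [Finset.prod_mul_distrib,
      Finset.prod_ite_eq' Finset.univ lastI (fun k => ρ ^ q ^ x.1 k),
      if_pos (Finset.mem_univ _), ← hK]
  -- summability of the mono-indexed family
  have hsum2 : Summable G := by
    rw [psSummable_iff]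
    intro d
    apply NonarchimedeanAddGroup.summable_of_tendsto_cofinite_zero
    rw [NormedAddCommGroup.tendsto_nhds_zero]
    intro ε hε
    rw [Filter.eventually_cofinite]
    have htend : Tendsto (fun N : ℕ => K * ρ ^ N) atTop (𝓝 0) := by
      have := (tendsto_pow_atTop_nhds_zero_of_lt_one hρ0 hρ1).const_mul K
      simpa using this
    obtain ⟨N, hN⟩ := Filter.eventually_atTop.mp (htend.eventually_lt_const hε)
    apply Set.Finite.subset
      ((Set.Finite.pi (fun _ : Fin (r + 1 - i) => Set.finite_Iio N)).preimage
        Subtype.val_injective.injOn)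
    intro x hx
    simp only [Set.mem_setOf_eq, not_lt] at hx
    simp only [Set.mem_preimage, Set.mem_pi, Set.mem_univ, Set.mem_Iio, forall_true_left]
    intro k
    have hklast : x.1 k ≤ x.1 lastI := by
      apply x.2
      rw [Fin.le_def]
      have := k.2
      simp only [hlastI]
      omega
    suffices hlt : x.1 lastI < N by omega
    by_contra hge
    push_neg at hge
    have : ‖PowerSeries.coeff d (G x)‖ < ε := by
      calc ‖PowerSeries.coeff d (G x)‖ ≤ K * ρ ^ q ^ x.1 lastI := hbound x d
        _ ≤ K * ρ ^ x.1 lastI := by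
            apply mul_le_mul_of_nonneg_left _ hKpos.le
            exact pow_le_pow_of_le_one hρ0 hρ1.le (Nat.lt_pow_self (by omega : 1 < q)).le
        _ < ε := hN _ hge
    exact absurd hx (not_le.mpr this)
  -- transporting along the bijection
  have hbij : Function.Bijective (chainToMono i r) :=
    ⟨chainToMono_injective i r hir, chainToMono_surjective i r hir⟩
  have hcomp : ∀ p : (Σ n : ℕ,
      {kc : Fin (n + 1) → ℕ // Monotone kc ∧ kc 0 = i ∧ ∀ m, kc m ≤ r}),
      starChainProd q θ s u r p.2.1 = G (chainToMono i r p) := by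
    rintro ⟨n, kc, hkc, h0, hle⟩
    exact starChainProd_eq q θ s u i r hir kc hkc h0 hle
  have hsum1 : Summable (fun p : Σ n : ℕ,
      {kc : Fin (n + 1) → ℕ // Monotone kc ∧ kc 0 = i ∧ ∀ m, kc m ≤ r} =>
      starChainProd q θ s u r p.2.1) := by
    have h := ((Equiv.ofBijective _ hbij).summable_iff (f := G)).mpr hsum2
    exact h.congr (fun p => (hcomp p).symm)
  refine ⟨hsum1, hsum2, ?_⟩
  rw [tsum_congr hcomp]
  exact (Equiv.ofBijective _ hbij).tsum_eq G
end
end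

section
/- Let 𝔰 = (s_1,…,s_r) be a tuple of positive integers and let u_1,…,u_r ∈ F be nonzero elements with |u_1| < q^{s_1·q/(q−1)} and |u_k| ≤ q^{s_k·q/(q−1)} for 2 ≤ k ≤ r. Then the family (u_1^{q^{i_1}}⋯u_r^{q^{i_r}}/(L_{i_1}^{s_1}⋯L_{i_r}^{s_r})), indexed by integers i_1 ≥ i_2 ≥ ⋯ ≥ i_r ≥ 0, is summable in F, and its sum Li⋆_𝔰(u) satisfies |Li⋆_𝔰(u)| = |u_1·u_2⋯u_r|; in particular Li⋆_𝔰(u) ≠ 0. (This is the nonvanishing remark for Carlitz multiple star polylogarithms in Section 5.2 of the paper.) -/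
open Filter Topology

noncomputable section

variable {F : Type*} [NormedField F]

/-- `L_i = (θ-θ^q)⋯(θ-θ^{q^i})`, with `L_0 = 1`. -/
def LF (q : ℕ) (θ : F) (i : ℕ) : F :=
  ∏ m ∈ Finset.range i, (θ - θ ^ q ^ (m + 1))

lemma norm_LF {F : Type*} [NormedField F] [IsUltrametricDist F]
    {q : ℕ} (hq : 2 ≤ q) {θ : F} (hθ : ‖θ‖ = (q : ℝ)) (i : ℕ) :
    ‖LF q θ i‖ = (q : ℝ) ^ (∑ m ∈ Finset.range i, q ^ (m + 1)) := by
  have ha1 : (1 : ℝ) < (q : ℝ) := by exact_mod_cast hq.trans_lt' one_lt_two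
  rw [LF, norm_prod, ← Finset.prod_pow_eq_pow_sum]
  refine Finset.prod_congr rfl fun m _ => ?_
  have hn : 1 < q ^ (m + 1) := Nat.one_lt_pow (Nat.succ_ne_zero m) hq
  have hlt : ‖θ‖ < ‖θ ^ q ^ (m + 1)‖ := by
    rw [norm_pow, hθ]
    calc ((q:ℝ)) = (q:ℝ) ^ 1 := (pow_one _).symm
    _ < (q:ℝ) ^ q ^ (m+1) := by
        exact pow_lt_pow_right₀ ha1 hn
  rw [sub_eq_add_neg, IsUltrametricDist.norm_add_eq_max_of_norm_ne_norm
    (by rw [norm_neg]; exact hlt.ne), norm_neg, max_eq_right hlt.le, norm_pow, hθ]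

lemma LF_pow_eq {F : Type*} [NormedField F] [IsUltrametricDist F]
    {q : ℕ} (hq : 2 ≤ q) {θ : F} (hθ : ‖θ‖ = (q : ℝ)) (c : ℕ) (i : ℕ) :
    ‖LF q θ i‖ ^ c = ((q : ℝ) ^ ((c : ℝ) * (q : ℝ) / ((q : ℝ) - 1))) ^ (q ^ i - 1) := by
  have ha1 : (1 : ℝ) < (q : ℝ) := by exact_mod_cast hq.trans_lt' one_lt_two
  have ha0 : (0 : ℝ) < (q : ℝ) := lt_trans one_pos ha1
  rw [norm_LF hq hθ, ← pow_mul, ← Real.rpow_natCast ((q:ℝ)) ((∑ m ∈ Finset.range i, q ^ (m+1)) * c),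
    ← Real.rpow_natCast ((q : ℝ) ^ ((c : ℝ) * (q : ℝ) / ((q : ℝ) - 1))) (q ^ i - 1),
    ← Real.rpow_mul ha0.le]
  congr 1
  have hcast : ((q ^ i - 1 : ℕ) : ℝ) = (q : ℝ) ^ i - 1 := by
    push_cast [Nat.cast_sub (Nat.one_le_pow _ _ (lt_of_lt_of_le two_pos hq))]
    ring
  have hsum : ((∑ m ∈ Finset.range i, q ^ (m + 1) : ℕ) : ℝ)
      = (q : ℝ) * (((q : ℝ) ^ i - 1) / ((q : ℝ) - 1)) := by
    push_cast
    have : ∀ m, (q : ℝ) ^ (m + 1) = (q:ℝ) * (q:ℝ) ^ m := fun m => by ring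
    rw [Finset.sum_congr rfl fun m _ => this m, ← Finset.mul_sum, geom_sum_eq ha1.ne']
  push_cast [hsum, hcast]
  have hne : (q : ℝ) - 1 ≠ 0 := sub_ne_zero.mpr ha1.ne'
  field_simp

lemma factor_norm {F : Type*} [NormedField F] [IsUltrametricDist F]
    {q : ℕ} (hq : 2 ≤ q) {θ : F} (hθ : ‖θ‖ = (q : ℝ)) (u : F) (c : ℕ) (i : ℕ) :
    ‖u ^ q ^ i / LF q θ i ^ c‖
      = ‖u‖ * (‖u‖ / (q : ℝ) ^ ((c : ℝ) * (q : ℝ) / ((q : ℝ) - 1))) ^ (q ^ i - 1) := by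
  rw [norm_div, norm_pow, norm_pow, LF_pow_eq hq hθ, div_pow,
    show q ^ i = (q ^ i - 1) + 1 from
      (Nat.succ_pred_eq_of_pos (pow_pos (lt_of_lt_of_le two_pos hq) i)).symm, pow_succ]
  have : q ^ i - 1 + 1 - 1 = q ^ i - 1 := by omega
  rw [this]
  ring

/-- nonvanishing remark for Carlitz multiple star polylogarithms,
Section 5.2 of the paper.  For nonzero `u_1,…,u_r` with `|u_1| < q^{s_1 q/(q−1)}` and
`|u_k| ≤ q^{s_k q/(q−1)}` for `2 ≤ k ≤ r`, the family
`(u_1^{q^{i_1}}⋯u_r^{q^{i_r}}/(L_{i_1}^{s_1}⋯L_{i_r}^{s_r}))_{i_1 ≥ ⋯ ≥ i_r ≥ 0}` is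
summable in `F`, and `|Li⋆_𝔰(u)| = |u_1 u_2 ⋯ u_r|`; in particular `Li⋆_𝔰(u) ≠ 0`. -/
theorem statement7
    {F : Type*} [NormedField F] [IsUltrametricDist F] [CompleteSpace F]
    (q : ℕ) (hq : IsPrimePow q) (θ : F) (hθ : ‖θ‖ = (q : ℝ))
    {r : ℕ} (hr : 0 < r) (s : Fin r → ℕ) (hs : ∀ k, 0 < s k)
    (u : Fin r → F) (hu0 : ∀ k, u k ≠ 0)
    (h1 : ‖u ⟨0, hr⟩‖ < (q : ℝ) ^ ((s ⟨0, hr⟩ : ℝ) * (q : ℝ) / ((q : ℝ) - 1)))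
    (hk : ∀ k : Fin r, k ≠ ⟨0, hr⟩ →
      ‖u k‖ ≤ (q : ℝ) ^ ((s k : ℝ) * (q : ℝ) / ((q : ℝ) - 1))) :
    Summable (fun i : {i : Fin r → ℕ // Antitone i} =>
      ∏ k, u k ^ q ^ i.1 k / LF q θ (i.1 k) ^ s k)
    ∧ ‖∑' i : {i : Fin r → ℕ // Antitone i},
          ∏ k, u k ^ q ^ i.1 k / LF q θ (i.1 k) ^ s k‖ = ∏ k, ‖u k‖
    ∧ (∑' i : {i : Fin r → ℕ // Antitone i},
          ∏ k, u k ^ q ^ i.1 k / LF q θ (i.1 k) ^ s k) ≠ 0 := by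
  classical
  have hq2 : 2 ≤ q := hq.two_le
  have ha1 : (1 : ℝ) < (q : ℝ) := by exact_mod_cast hq2.trans_lt' one_lt_two
  set k0 : Fin r := ⟨0, hr⟩ with hk0
  set f : {i : Fin r → ℕ // Antitone i} → F :=
    fun i => ∏ k, u k ^ q ^ i.1 k / LF q θ (i.1 k) ^ s k with hf
  set A : Fin r → ℝ := fun k => (q : ℝ) ^ ((s k : ℝ) * (q : ℝ) / ((q : ℝ) - 1)) with hA
  have hApos : ∀ k, 0 < A k := fun k => Real.rpow_pos_of_pos (lt_trans one_pos ha1) _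
  set ρ : Fin r → ℝ := fun k => ‖u k‖ / A k with hρ
  have hρnn : ∀ k, 0 ≤ ρ k := fun k => div_nonneg (norm_nonneg _) (hApos k).le
  have hρ0 : ρ k0 < 1 := (div_lt_one (hApos k0)).mpr h1
  have hρle : ∀ k, ρ k ≤ 1 := by
    intro k
    by_cases h : k = k0
    · exact h ▸ hρ0.le
    · exact (div_le_one (hApos k)).mpr (hk k h)
  have hnf : ∀ i : {i : Fin r → ℕ // Antitone i},
      ‖f i‖ = ∏ k, (‖u k‖ * ρ k ^ (q ^ i.1 k - 1)) := by
    intro i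
    rw [hf, norm_prod]
    exact Finset.prod_congr rfl fun k _ => factor_norm hq2 hθ (u k) (s k) (i.1 k)
  set B : ℝ := ∏ k, ‖u k‖ with hB
  have hBpos : 0 < B := Finset.prod_pos fun k _ => norm_pos_iff.mpr (hu0 k)
  have hbound : ∀ i : {i : Fin r → ℕ // Antitone i},
      ‖f i‖ ≤ B * ρ k0 ^ (q ^ i.1 k0 - 1) := by
    intro i
    rw [hnf i, Finset.prod_mul_distrib]
    refine mul_le_mul_of_nonneg_left ?_ (Finset.prod_nonneg fun k _ => norm_nonneg _)
    calc ∏ k, ρ k ^ (q ^ i.1 k - 1)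
        = ρ k0 ^ (q ^ i.1 k0 - 1) * ∏ k ∈ Finset.univ.erase k0, ρ k ^ (q ^ i.1 k - 1) :=
          (Finset.mul_prod_erase Finset.univ _ (Finset.mem_univ k0)).symm
      _ ≤ ρ k0 ^ (q ^ i.1 k0 - 1) * 1 := by
          refine mul_le_mul_of_nonneg_left ?_ (pow_nonneg (hρnn k0) _)
          exact Finset.prod_le_one (fun k _ => pow_nonneg (hρnn k) _)
            (fun k _ => pow_le_one₀ (hρnn k) (hρle k))
      _ = ρ k0 ^ (q ^ i.1 k0 - 1) := mul_one _
  have hfincoord : ∀ b : ℕ, {i : {i : Fin r → ℕ // Antitone i} | i.1 k0 < b}.Finite := by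
    intro b
    have hsub : {i : {i : Fin r → ℕ // Antitone i} | i.1 k0 < b}
        ⊆ (Subtype.val) ⁻¹' (Set.pi Set.univ fun _ : Fin r => Set.Iio b) := by
      intro i hi k _
      exact lt_of_le_of_lt (i.2 (show k0 ≤ k by simp [hk0, Fin.le_def])) hi
    exact ((Set.Finite.pi fun _ => Set.finite_Iio b).preimage
      (Subtype.val_injective.injOn)).subset hsub
  have hcoord : Tendsto (fun i : {i : Fin r → ℕ // Antitone i} => i.1 k0) cofinite atTop := by
    rw [tendsto_atTop]
    intro b
    rw [eventually_cofinite]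
    exact (hfincoord b).subset fun i hi => by simpa using hi
  have hbound2 : ∀ i : {i : Fin r → ℕ // Antitone i}, ‖f i‖ ≤ B * ρ k0 ^ i.1 k0 := by
    intro i
    refine (hbound i).trans (mul_le_mul_of_nonneg_left ?_ hBpos.le)
    refine pow_le_pow_of_le_one (hρnn k0) (hρle k0) ?_
    have := Nat.lt_pow_self (n := i.1 k0) (lt_of_lt_of_le one_lt_two hq2)
    omega
  have htnorm : Tendsto (fun i : {i : Fin r → ℕ // Antitone i} => ‖f i‖) cofinite (𝓝 0) := by
    have h2 : Tendsto (fun i : {i : Fin r → ℕ // Antitone i} => B * ρ k0 ^ i.1 k0)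
        cofinite (𝓝 (B * 0)) :=
      ((tendsto_pow_atTop_nhds_zero_of_lt_one (hρnn k0) hρ0).comp hcoord).const_mul B
    rw [mul_zero] at h2
    exact squeeze_zero (fun i => norm_nonneg _) hbound2 h2
  have hsum : Summable f :=
    NonarchimedeanAddGroup.summable_of_tendsto_cofinite_zero
      (tendsto_zero_iff_norm_tendsto_zero.mpr htnorm)
  set i₀ : {i : Fin r → ℕ // Antitone i} := ⟨fun _ => 0, fun _ _ _ => le_refl 0⟩ with hi₀def
  have hfi₀ : f i₀ = ∏ k, u k := by
    simp [hf, hi₀def, LF]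
  have hnormi₀ : ‖f i₀‖ = B := by rw [hfi₀, norm_prod]
  have hne1 : ∀ i : {i : Fin r → ℕ // Antitone i}, i ≠ i₀ → 1 ≤ i.1 k0 := by
    intro i hi
    by_contra h
    push_neg at h
    apply hi
    apply Subtype.ext
    funext k
    have h2 := i.2 (show k0 ≤ k by simp [hk0, Fin.le_def])
    simp only [hi₀def]
    omega
  have hD : ∀ i : {i : Fin r → ℕ // Antitone i}, i ≠ i₀ → ‖f i‖ ≤ B * ρ k0 := by
    intro i hi
    refine (hbound i).trans (mul_le_mul_of_nonneg_left ?_ hBpos.le)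
    calc ρ k0 ^ (q ^ i.1 k0 - 1) ≤ ρ k0 ^ 1 := by
          refine pow_le_pow_of_le_one (hρnn k0) (hρle k0) ?_
          have h1' := hne1 i hi
          have h2' : q ≤ q ^ i.1 k0 := by
            calc q = q ^ 1 := (pow_one q).symm
            _ ≤ q ^ i.1 k0 := Nat.pow_le_pow_right (by omega) h1'
          omega
      _ = ρ k0 := pow_one _
  have hDlt : B * ρ k0 < B := mul_lt_of_lt_one_right hBpos hρ0
  have hDnn : 0 ≤ B * ρ k0 := mul_nonneg hBpos.le (hρnn k0)
  have hsplit := Summable.tsum_eq_add_tsum_ite hsum i₀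
  have hrest : ‖∑' i, if i = i₀ then 0 else f i‖ ≤ B * ρ k0 := by
    apply IsUltrametricDist.norm_tsum_le_of_forall_le_of_nonneg hDnn
    intro i
    by_cases h : i = i₀
    · simpa [h] using hDnn
    · simpa [h] using hD i h
  have hfinal : ‖∑' i, f i‖ = B := by
    rw [hsplit, IsUltrametricDist.norm_add_eq_max_of_norm_ne_norm
      (by rw [hnormi₀]; exact (lt_of_le_of_lt hrest hDlt).ne'), hnormi₀,
      max_eq_left (hrest.trans hDlt.le)]
  refine ⟨hsum, hfinal, ?_⟩
  have : ‖∑' i, f i‖ ≠ 0 := by rw [hfinal]; exact hBpos.ne'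
  exact norm_ne_zero_iff.mp this
end
end

section
/- Let p be a prime, q a power of p, and F a perfect field of characteristic p; for a polynomial P ∈ F[t], write P^{(−1)} for the polynomial obtained by applying the inverse of the q-power Frobenius of F to each coefficient of P. Let θ ∈ F, let r ≥ 1 and s_1,…,s_r be positive integers, set d_i := s_i+⋯+s_r, and let Q_1,…,Q_{r−1} ∈ F[t]. Let Φ′ ∈ Mat_{r×r}(F[t]) be the matrix with diagonal entries Φ′_{ii} = (t−θ)^{d_i} for 1 ≤ i ≤ r, subdiagonal entries Φ′_{i+1,i} = Q_i^{(−1)}·(t−θ)^{d_i} for 1 ≤ i ≤ r−1, and all other entries 0. Then for every 1 ≤ i ≤ r and every integer N ≥ d_i there exists a row vector a ∈ Mat_{1×r}(F[t]) such that a^{(−1)}·Φ′ = (t−θ)^N·e_i, where a^{(−1)} applies the inverse Frobenius to every coefficient of every entry of a, and e_i is the i-th standard basis row vector. (This is Proposition 2.? (P: delta0) of the paper: (t−θ)^N·m_i ∈ σM′ for all N ≥ d_i, for the dual t-motive M′ defined by Φ′.) -/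
noncomputable section

/-- Proposition "P: delta0" of the paper: `(t−θ)^N·m_i ∈ σM′` for all
`N ≥ d_i`.  `F` is a perfect field of characteristic `p`, `q = p^e`, and `σ : F →+* F` is
the inverse of the `q`-power Frobenius (so `σ(x)^q = x` and `σ(x^q) = x`); `P^{(−1)}` is
`σ` applied coefficientwise, i.e. `P.map σ`.  `Φ′` has diagonal entries `(t−θ)^{d_i}`,
subdiagonal entries `Φ′_{i+1,i} = Q_i^{(−1)}(t−θ)^{d_i}`, and zeros elsewhere (indices
`0`-based: row `b+1`, column `b` carries `(Q b).map σ · (t−θ)^{d b}`).  Then for every `i`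
and every `N ≥ d_i` there is a row vector `a` with `a^{(−1)} ⬝ Φ′ = (t−θ)^N e_i`. -/
theorem statement10
    (p : ℕ) (hp : p.Prime) (e : ℕ) (he : 1 ≤ e) (q : ℕ) (hq : q = p ^ e)
    {F : Type*} [Field F] [CharP F p]
    (σ : F →+* F) (hσ₁ : ∀ x : F, σ x ^ q = x) (hσ₂ : ∀ x : F, σ (x ^ q) = x)
    (θ : F) {r : ℕ} (hr : 0 < r)
    (s : Fin r → ℕ) (hs : ∀ k, 0 < s k)
    (d : Fin r → ℕ) (hd : ∀ a, d a = ∑ k ∈ Finset.Ici a, s k)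
    (Q : Fin r → Polynomial F)
    (Φ : Matrix (Fin r) (Fin r) (Polynomial F))
    (hΦ : ∀ a b : Fin r, Φ a b =
      if a = b then (Polynomial.X - Polynomial.C θ) ^ d a
      else if (a : ℕ) = (b : ℕ) + 1 then
        (Q b).map σ * (Polynomial.X - Polynomial.C θ) ^ d b
      else 0) :
    ∀ i : Fin r, ∀ N : ℕ, d i ≤ N →
      ∃ a : Fin r → Polynomial F,
        Matrix.vecMul (fun k => (a k).map σ) Φ =
          fun k => if k = i then (Polynomial.X - Polynomial.C θ) ^ N else 0 := by
   
  intro i N hN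
  classical
  haveI : ExpChar F p := ExpChar.prime hp
  set P : Polynomial F := Polynomial.X - Polynomial.C θ with hP
  set b : Fin r → Polynomial F := fun k =>
    if k ≤ i then (-1 : Polynomial F) ^ ((i : ℕ) - (k : ℕ)) * P ^ (N - d i)
        * ∏ j ∈ Finset.Ico k i, (Q j).map σ
      else 0 with hb
  refine ⟨fun k => (b k).map (iterateFrobenius F p e), ?_⟩
  have hcomp : σ.comp (iterateFrobenius F p e) = RingHom.id F := by
    ext x
    simp only [RingHom.comp_apply, RingHom.id_apply, iterateFrobenius_def]
    rw [← hq]; exact hσ₂ x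
  have hmap : ∀ k, ((b k).map (iterateFrobenius F p e)).map σ = b k := by
    intro k
    rw [Polynomial.map_map, hcomp, Polynomial.map_id]
  funext k
  simp only [Matrix.vecMul, dotProduct, hmap]
  have hsum : ∀ j : Fin r, (b j) * Φ j k =
      (if j = k then b k * P ^ (d k) else 0) +
      (if (j : ℕ) = (k : ℕ) + 1 then b j * ((Q k).map σ * P ^ (d k)) else 0) := by
    intro j
    by_cases h1 : j = k
    · subst h1
      have h2 : ¬ ((j : ℕ) = (j : ℕ) + 1) := by omega
      simp [hΦ, h2]
    · by_cases h2 : (j : ℕ) = (k : ℕ) + 1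
      · simp [hΦ, h1, h2, mul_assoc]
      · simp [hΦ, h1, h2]
  rw [Finset.sum_congr rfl (fun j _ => hsum j), Finset.sum_add_distrib,
    Finset.sum_ite_eq' Finset.univ k]
  have hsum2 : (∑ j : Fin r, (if (j : ℕ) = (k : ℕ) + 1 then b j * ((Q k).map σ * P ^ (d k)) else 0))
      = if h : (k : ℕ) + 1 < r then b ⟨(k : ℕ) + 1, h⟩ * ((Q k).map σ * P ^ (d k)) else 0 := by
    split_ifs with h
    · rw [Finset.sum_eq_single (⟨(k : ℕ) + 1, h⟩ : Fin r)]
      · simp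
      · intro j _ hj
        rw [if_neg]
        intro hc
        exact hj (Fin.ext hc)
      · simp
    · apply Finset.sum_eq_zero
      intro j _
      have := j.isLt
      rw [if_neg]
      omega
  rw [hsum2]
  simp only [Finset.mem_univ, if_pos]
  by_cases hki : k = i
  · subst hki
    have hb_k : b k = P ^ (N - d k) := by
      simp [hb, Finset.Ico_self]
    have hb_succ : ∀ h : (k : ℕ) + 1 < r, b ⟨(k : ℕ) + 1, h⟩ = 0 := by
      intro h
      have hle : ¬ ((⟨(k : ℕ) + 1, h⟩ : Fin r) ≤ k) := by
        simp [Fin.le_def]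
      simp [hb, hle]
    rw [hb_k, if_pos rfl]
    split_ifs with h
    · rw [hb_succ h, zero_mul, add_zero, ← pow_add, Nat.sub_add_cancel hN]
    · rw [add_zero, ← pow_add, Nat.sub_add_cancel hN]
  · rw [if_neg hki]
    by_cases hki2 : k ≤ i
    · -- k < i
      have hklt : (k : ℕ) < (i : ℕ) := by
        rcases lt_or_eq_of_le hki2 with h | h
        · exact h
        · exact absurd h hki
      have h : (k : ℕ) + 1 < r := by
        have := i.isLt
        omega
      set k' : Fin r := ⟨(k : ℕ) + 1, h⟩ with hk'
      have hk'le : k' ≤ i := by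
        simp [hk', Fin.le_def]
        omega
      rw [dif_pos h]
      have hIco : Finset.Ico k i = insert k (Finset.Ico k' i) := by
        ext j
        simp only [Finset.mem_Ico, Finset.mem_insert, Fin.le_def, Fin.lt_def, Fin.ext_iff, hk']
        omega
      have hk_not : k ∉ Finset.Ico k' i := by
        simp [Finset.mem_Ico, Fin.le_def, hk']
      have hsign : ((i : ℕ) - (k : ℕ)) = ((i : ℕ) - (k : ℕ) - 1) + 1 := by omega
      have hik' : ((i : ℕ) - ((k' : Fin r) : ℕ)) = (i : ℕ) - (k : ℕ) - 1 := by
        simp only [hk']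
        omega
      simp only [hb]
      rw [if_pos hki2, if_pos hk'le, hIco, Finset.prod_insert hk_not, hsign, hik', pow_succ]
      ring
    · -- i < k
      have hb_k : b k = 0 := by rw [hb]; exact if_neg hki2
      have hb_succ : ∀ h : (k : ℕ) + 1 < r, b ⟨(k : ℕ) + 1, h⟩ = 0 := by
        intro h
        have hle : ¬ ((⟨(k : ℕ) + 1, h⟩ : Fin r) ≤ i) := by
          rw [Fin.le_def] at hki2 ⊢
          simp only [Fin.val_mk]
          omega
        simp [hb, hle]
      rw [hb_k, zero_mul, zero_add]
      split_ifs with h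
      · rw [hb_succ h, zero_mul]
      · rfl
end
end

section
/- Let F be a field with a nonarchimedean multiplicative absolute value |·| and θ ∈ F with |θ| = q > 1. Let (b_i)_{i≥0} be a sequence in F with |b_i|·q^i → 0 as i → ∞. Suppose that for every i ≥ 0 the family (C(j,i)·b_j·θ^{j−i})_{j≥i} — where the binomial coefficient C(j,i) ∈ ℕ is regarded in F via the canonical map ℕ → F — is summable with sum 0. Then b_i = 0 for all i ≥ 0. (This is the injectivity of the map η : 𝕋_θ → F[[t−θ]], Σ b_i t^i ↦ Σ_i (Σ_{j≥i} C(j,i) b_j θ^{j−i})·(t−θ)^i, proved in Section 2.4 of the paper.) -/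
open Filter Topology

/-- injectivity of `η : 𝕋_θ → F[[t−θ]]`, Section 2.4 of the paper.
If `(b_i)` satisfies `|b_i| q^i → 0` and for every `i` the family
`(C(j,i)·b_j·θ^{j−i})_{j≥i}` (reindexed by `j = i + n`) is summable with sum `0`, then
all the `b_i` vanish. -/
theorem statement12
    {F : Type*} [NormedField F] [IsUltrametricDist F] [CompleteSpace F]
    (q : ℕ) (hq : IsPrimePow q) (θ : F) (hθ : ‖θ‖ = (q : ℝ))
    (b : ℕ → F)
    (hb : Tendsto (fun i => ‖b i‖ * (q : ℝ) ^ i) atTop (nhds 0))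
    (hsum : ∀ i : ℕ,
      HasSum (fun n : ℕ => (((i + n).choose i : ℕ) : F) * b (i + n) * θ ^ n) 0) :
    ∀ i, b i = 0 := by
  have hq1 : (1 : ℝ) < (q : ℝ) := by exact_mod_cast hq.one_lt
  have hqpos : (0 : ℝ) < (q : ℝ) := lt_trans one_pos hq1
  have key : ∀ ε : ℝ, 0 < ε → ∀ i, ‖b i‖ * (q : ℝ) ^ i ≤ ε := by
    intro ε hε
    obtain ⟨N, hN⟩ := Metric.tendsto_atTop.mp hb ε hε
    have hN' : ∀ j, N ≤ j → ‖b j‖ * (q : ℝ) ^ j ≤ ε := by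
      intro j hj
      have := hN j hj
      rw [Real.dist_eq, sub_zero, abs_of_nonneg (by positivity)] at this
      exact this.le
    have main : ∀ k, ∀ i, N ≤ i + k → ‖b i‖ * (q : ℝ) ^ i ≤ ε := by
      intro k
      induction k with
      | zero => intro i hi; exact hN' i (by omega)
      | succ k ih =>
        intro i hi
        by_cases hiN : N ≤ i
        · exact hN' i hiN
        · have hshift := (hasSum_nat_add_iff' (f := fun n : ℕ =>
            (((i + n).choose i : ℕ) : F) * b (i + n) * θ ^ n) 1).mpr (hsum i)
          simp only [Finset.range_one, Finset.sum_singleton, Nat.add_zero, Nat.choose_self,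
            Nat.cast_one, one_mul, pow_zero, mul_one, zero_sub] at hshift
          -- each term of the shifted sum has norm ≤ ε / q ^ i
          have hterm : ∀ n : ℕ,
              ‖(((i + (n + 1)).choose i : ℕ) : F) * b (i + (n + 1)) * θ ^ (n + 1)‖
                ≤ ε / (q : ℝ) ^ i := by
            intro n
            have hC : ‖(((i + (n + 1)).choose i : ℕ) : F)‖ ≤ 1 :=
              IsUltrametricDist.norm_natCast_le_one F _
            have hbn : ‖b (i + (n + 1))‖ * (q : ℝ) ^ (i + (n + 1)) ≤ ε :=
              ih (i + (n + 1)) (by omega)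
            have h1 : ‖(((i + (n + 1)).choose i : ℕ) : F) * b (i + (n + 1)) * θ ^ (n + 1)‖
                ≤ ‖b (i + (n + 1))‖ * (q : ℝ) ^ (n + 1) := by
              rw [norm_mul, norm_mul, norm_pow, hθ]
              have : ‖(((i + (n + 1)).choose i : ℕ) : F)‖ * ‖b (i + (n + 1))‖
                  ≤ ‖b (i + (n + 1))‖ := by
                nlinarith [norm_nonneg (b (i + (n + 1)))]
              nlinarith [pow_pos hqpos (n + 1), norm_nonneg (b (i + (n + 1))),
                mul_le_mul_of_nonneg_right this (le_of_lt (pow_pos hqpos (n + 1)))]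
            refine h1.trans ?_
            rw [le_div_iff₀ (pow_pos hqpos i)]
            calc ‖b (i + (n + 1))‖ * (q : ℝ) ^ (n + 1) * (q : ℝ) ^ i
                = ‖b (i + (n + 1))‖ * (q : ℝ) ^ (i + (n + 1)) := by rw [pow_add]; ring
              _ ≤ ε := hbn
          have hεq : (0 : ℝ) ≤ ε / (q : ℝ) ^ i := by positivity
          have hnorm : ‖-b i‖ ≤ ε / (q : ℝ) ^ i := by
            rw [← hshift.tsum_eq]
            exact IsUltrametricDist.norm_tsum_le_of_forall_le_of_nonneg hεq hterm
          rw [norm_neg] at hnorm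
          calc ‖b i‖ * (q : ℝ) ^ i ≤ ε / (q : ℝ) ^ i * (q : ℝ) ^ i :=
                mul_le_mul_of_nonneg_right hnorm (le_of_lt (pow_pos hqpos i))
            _ = ε := div_mul_cancel₀ ε (ne_of_gt (pow_pos hqpos i))
    intro i
    exact main N i (by omega)
  intro i
  by_contra hbi
  have hpos : 0 < ‖b i‖ * (q : ℝ) ^ i := by
    have := norm_pos_iff.mpr hbi
    positivity
  have := key (‖b i‖ * (q : ℝ) ^ i / 2) (by linarith) i
  linarith
end

section
/- Suppose F is complete. (i) If (b_j)_{j≥0} is a sequence in F with |b_j|·q^j → 0, then for every i ≥ 0 the family (C(j,i)·b_j·θ^{j−i})_{j≥i} (binomial coefficients regarded in F via ℕ → F) is summable, and its sum a_i satisfies |a_i|·q^i ≤ sup_{j≥i} |b_j|·q^j; in particular |a_i|·q^i → 0 as i → ∞. (ii) Conversely, for every sequence (a_i)_{i≥0} in F with |a_i|·q^i → 0 there exists a unique sequence (b_j)_{j≥0} with |b_j|·q^j → 0 such that a_i = Σ_{j≥i} C(j,i)·b_j·θ^{j−i} for all i ≥ 0. (This identifies the image of the map η : 𝕋_θ → F[[t−θ]]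 as {Σ b_i(t−θ)^i : |b_i|·q^i → 0}, as asserted in Section 2.4 of the paper.) -/
open Filter Topology

section St13Aux

lemma st13_term_norm {F : Type*} [NormedField F] {q : ℕ} (hq : 1 < q) {θ : F}
    (hθ : ‖θ‖ = (q : ℝ)) (x y : F) (hx : ‖x‖ ≤ 1) (n : ℕ) :
    ‖x * y * θ ^ n‖ ≤ ‖y‖ * (q : ℝ) ^ n := by
  rw [norm_mul, norm_mul, norm_pow, hθ]
  have h1 : (0:ℝ) ≤ ‖y‖ := norm_nonneg y
  have h2 : (0:ℝ) ≤ (q:ℝ) ^ n := by positivity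
  nlinarith [norm_nonneg x, mul_nonneg h1 h2]

lemma st13_lemA {F : Type*} [NormedField F] [IsUltrametricDist F] [CompleteSpace F]
    {q : ℕ} (hq : 1 < q) {θ : F} (hθ : ‖θ‖ = (q : ℝ))
    (c : ℕ → ℕ → F) (hc : ∀ i n, ‖c i n‖ ≤ 1) (b : ℕ → F)
    (hb : Tendsto (fun j => ‖b j‖ * (q : ℝ) ^ j) atTop (nhds 0)) :
    (∀ i : ℕ,
      Summable (fun n : ℕ => c i n * b (i + n) * θ ^ n) ∧
      ‖∑' n : ℕ, c i n * b (i + n) * θ ^ n‖ * (q : ℝ) ^ i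
        ≤ ⨆ j : {j : ℕ // i ≤ j}, ‖b (j : ℕ)‖ * (q : ℝ) ^ (j : ℕ)) ∧
    Tendsto (fun i : ℕ => ‖∑' n : ℕ, c i n * b (i + n) * θ ^ n‖ * (q : ℝ) ^ i)
      atTop (nhds 0) := by
  have hq0 : (0:ℝ) < (q:ℝ) := by exact_mod_cast Nat.lt_of_lt_of_le Nat.zero_lt_one hq.le
  set f : ℕ → ℝ := fun j => ‖b j‖ * (q : ℝ) ^ j with hf
  have hf0 : ∀ j, 0 ≤ f j := fun j => by positivity
  have hbdd : BddAbove (Set.range f) := hb.bddAbove_range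
  have hterm : ∀ i n, ‖c i n * b (i + n) * θ ^ n‖ * (q:ℝ) ^ i ≤ f (i + n) := by
    intro i n
    have h := st13_term_norm hq hθ (c i n) (b (i + n)) (hc i n) n
    have : ‖c i n * b (i + n) * θ ^ n‖ * (q:ℝ) ^ i ≤ (‖b (i+n)‖ * (q:ℝ) ^ n) * (q:ℝ) ^ i := by
      have := pow_pos hq0 i
      nlinarith [norm_nonneg (c i n * b (i + n) * θ ^ n)]
    calc ‖c i n * b (i + n) * θ ^ n‖ * (q:ℝ) ^ i ≤ (‖b (i+n)‖ * (q:ℝ) ^ n) * (q:ℝ) ^ i := this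
      _ = f (i + n) := by simp only [hf, pow_add]; ring
  set g : ℕ → ℝ := fun i => ⨆ j : {j : ℕ // i ≤ j}, f (j : ℕ) with hg
  have hbdd' : ∀ i : ℕ, BddAbove (Set.range fun j : {j : ℕ // i ≤ j} => f (j : ℕ)) := by
    intro i
    obtain ⟨C, hC⟩ := hbdd
    exact ⟨C, by rintro x ⟨j, rfl⟩; exact hC ⟨(j : ℕ), rfl⟩⟩
  have hfg : ∀ i j, i ≤ j → f j ≤ g i := by
    intro i j hij
    exact le_ciSup (hbdd' i) ⟨j, hij⟩
  have hg0 : ∀ i, 0 ≤ g i := fun i => le_trans (hf0 i) (hfg i i le_rfl)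
  have hsumm : ∀ i, Summable (fun n : ℕ => c i n * b (i + n) * θ ^ n) := by
    intro i
    apply NonarchimedeanAddGroup.summable_of_tendsto_cofinite_zero
    rw [Nat.cofinite_eq_atTop, tendsto_zero_iff_norm_tendsto_zero]
    apply squeeze_zero (fun n => norm_nonneg _) (g := fun n => f (i + n) / (q:ℝ) ^ i)
    · intro n
      rw [le_div_iff₀ (pow_pos hq0 i)]
      exact hterm i n
    · have h1 : Tendsto (fun n => f (i + n)) atTop (nhds 0) := by
        have := hb.comp (tendsto_add_atTop_nat i)
        simpa [Function.comp_def, Nat.add_comm] using this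
      simpa using h1.div_const ((q:ℝ) ^ i)
  have hbound : ∀ i, ‖∑' n : ℕ, c i n * b (i + n) * θ ^ n‖ * (q : ℝ) ^ i ≤ g i := by
    intro i
    rw [← le_div_iff₀ (pow_pos hq0 i)]
    apply IsUltrametricDist.norm_tsum_le_of_forall_le_of_nonneg
    · exact div_nonneg (hg0 i) (by positivity)
    · intro n
      rw [le_div_iff₀ (pow_pos hq0 i)]
      exact le_trans (hterm i n) (hfg i (i + n) (Nat.le_add_right _ _))
  refine ⟨fun i => ⟨hsumm i, hbound i⟩, ?_⟩
  have hgto : Tendsto g atTop (nhds 0) := by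
    rw [Metric.tendsto_atTop]
    intro ε hε
    obtain ⟨N, hN⟩ := (Metric.tendsto_atTop.mp hb) (ε / 2) (by linarith)
    refine ⟨N, fun i hi => ?_⟩
    have : g i ≤ ε / 2 := by
      apply ciSup_le
      rintro ⟨j, hj⟩
      have := hN j (le_trans hi hj)
      rw [Real.dist_eq, sub_zero, abs_of_nonneg (hf0 j)] at this
      exact this.le
    rw [Real.dist_eq, sub_zero, abs_of_nonneg (hg0 i)]
    linarith
  exact squeeze_zero (fun i => by positivity) hbound hgto

lemma st13_key_int (i k : ℕ) :
    (∑ p ∈ Finset.HasAntidiagonal.antidiagonal k,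
      (-1 : ℤ) ^ p.2 * ((i + p.1).choose i) * ((i + k).choose (i + p.1)))
      = if k = 0 then 1 else 0 := by
  have h1 : ∀ p ∈ Finset.HasAntidiagonal.antidiagonal k,
      (-1 : ℤ) ^ p.2 * ((i + p.1).choose i) * ((i + k).choose (i + p.1))
      = ((i + k).choose i : ℤ) * ((-1 : ℤ) ^ p.2 * (k.choose p.1)) := by
    rintro ⟨n, m⟩ hp
    rw [Finset.HasAntidiagonal.mem_antidiagonal] at hp
    have hn : n ≤ k := by omega
    have hid : (i + k).choose (i + n) * (i + n).choose i = (i + k).choose i * k.choose n := by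
      have := Nat.choose_mul (n := i + k) (k := i + n) (s := i)
        (Nat.le_add_right _ _)
      simpa using this
    have : ((i + k).choose (i + n) * (i + n).choose i : ℤ)
        = ((i + k).choose i * k.choose n : ℤ) := by exact_mod_cast congrArg (Nat.cast : ℕ → ℤ) hid
    push_cast at this ⊢
    linear_combination (-1 : ℤ) ^ m * this
  rw [Finset.sum_congr rfl h1, ← Finset.mul_sum]
  have h2 : (∑ p ∈ Finset.HasAntidiagonal.antidiagonal k, (-1 : ℤ) ^ p.2 * (k.choose p.1))
      = (1 + (-1) : ℤ) ^ k := by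
    rw [add_pow, Finset.Nat.sum_antidiagonal_eq_sum_range_succ_mk]
    apply Finset.sum_congr rfl
    intro n hn
    ring
  rw [h2]
  norm_num
  rcases Nat.eq_zero_or_pos k with h | h
  · simp [h]
  · simp [zero_pow (Nat.pos_iff_ne_zero.mp h), Nat.pos_iff_ne_zero.mp h]

lemma st13_uniq {F : Type*} [NormedField F] [IsUltrametricDist F]
    {q : ℕ} (hq : 1 < q) {θ : F} (hθ : ‖θ‖ = (q : ℝ)) (d : ℕ → F)
    (hd : Tendsto (fun j => ‖d j‖ * (q : ℝ) ^ j) atTop (nhds 0))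
    (h : ∀ i : ℕ, HasSum (fun n : ℕ => (((i + n).choose i : ℕ) : F) * d (i + n) * θ ^ n) 0) :
    ∀ j, d j = 0 := by
  have hq0 : (0:ℝ) < (q:ℝ) := by exact_mod_cast Nat.lt_of_lt_of_le Nat.zero_lt_one hq.le
  set f : ℕ → ℝ := fun j => ‖d j‖ * (q : ℝ) ^ j with hf
  have hf0 : ∀ j, 0 ≤ f j := fun j => by positivity
  by_contra hcon
  push_neg at hcon
  obtain ⟨j₀, hj₀⟩ := hcon
  have hfj₀ : 0 < f j₀ := by
    have : 0 < ‖d j₀‖ := norm_pos_iff.mpr hj₀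
    positivity
  obtain ⟨N, hN⟩ := (Metric.tendsto_atTop.mp hd) (f j₀) hfj₀
  have hN' : ∀ j, N ≤ j → f j < f j₀ := by
    intro j hj
    have := hN j hj
    rwa [Real.dist_eq, sub_zero, abs_of_nonneg (hf0 j)] at this
  have hj₀N : j₀ < N := by
    by_contra hc
    exact absurd (hN' j₀ (by omega)) (lt_irrefl _)
  set A : Finset ℕ := (Finset.range N).filter (fun j => f j₀ ≤ f j) with hA
  have hj₀A : j₀ ∈ A := by
    simp [hA, Finset.mem_filter, Finset.mem_range, hj₀N]
  have hAne : A.Nonempty := ⟨j₀, hj₀A⟩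
  set M : ℝ := A.sup' hAne f with hM
  have hMfj₀ : f j₀ ≤ M := Finset.le_sup' f hj₀A
  have hM0 : 0 < M := lt_of_lt_of_le hfj₀ hMfj₀
  set B : Finset ℕ := A.filter (fun j => f j = M) with hB
  have hBne : B.Nonempty := by
    obtain ⟨j, hjA, hjM⟩ := Finset.exists_mem_eq_sup' hAne f
    exact ⟨j, by simp [hB, Finset.mem_filter, hjA, hjM.symm, hM]⟩
  set i : ℕ := B.max' hBne with hi
  have hiB : i ∈ B := B.max'_mem hBne
  have hfiM : f i = M := (Finset.mem_filter.mp hiB).2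
  have hlt : ∀ j, i < j → f j < M := by
    intro j hij
    rcases lt_or_ge j N with hjN | hjN
    · rcases lt_or_ge (f j) (f j₀) with h' | h'
      · exact lt_of_lt_of_le h' hMfj₀
      · have hjA : j ∈ A := by simp [hA, Finset.mem_filter, Finset.mem_range, hjN, h']
        have hle : f j ≤ M := Finset.le_sup' f hjA
        rcases eq_or_lt_of_le hle with he | hl
        · exfalso
          have : j ∈ B := by simp [hB, Finset.mem_filter, hjA, he]
          exact absurd (Finset.le_max' B j this) (by omega)
        · exact hl
    · exact lt_of_lt_of_le (hN' j hjN) hMfj₀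
  obtain ⟨N2, hN2⟩ := (Metric.tendsto_atTop.mp hd) (M / 2) (by linarith)
  have hN2' : ∀ j, N2 ≤ j → f j < M / 2 := by
    intro j hj
    have := hN2 j hj
    rwa [Real.dist_eq, sub_zero, abs_of_nonneg (hf0 j)] at this
  set r : ℝ := (Finset.Icc (i + 1) N2).fold max (M / 2) f with hr
  have hrM : r < M := by
    rw [hr, Finset.fold_max_lt]
    constructor
    · linarith
    · intro x hx
      rw [Finset.mem_Icc] at hx
      exact hlt x (by omega)
  have hrle : ∀ j, i < j → f j ≤ r := by
    intro j hij
    rcases lt_or_ge N2 j with hj2 | hj2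
    · have := hN2' j (by omega)
      rw [hr]
      calc f j ≤ M / 2 := this.le
        _ ≤ _ := (Finset.le_fold_max _).mpr (Or.inl le_rfl)
    · exact (Finset.le_fold_max _).mpr (Or.inr ⟨j, Finset.mem_Icc.mpr ⟨by omega, hj2⟩, le_rfl⟩)
  have hr0 : (0:ℝ) < r := by
    have : M / 2 ≤ r := (Finset.le_fold_max _).mpr (Or.inl le_rfl)
    linarith
  have hsum := h i
  have h0 : ∑ m ∈ Finset.range 1, (((i + m).choose i : ℕ) : F) * d (i + m) * θ ^ m = d i := by
    simp [Finset.sum_range_one]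
  have htail : HasSum
      (fun n : ℕ => (((i + (n + 1)).choose i : ℕ) : F) * d (i + (n + 1)) * θ ^ (n + 1))
      (-(d i)) := by
    apply (hasSum_nat_add_iff
      (f := fun n : ℕ => (((i + n).choose i : ℕ) : F) * d (i + n) * θ ^ n) 1).mpr
    rw [h0, neg_add_cancel]
    exact hsum
  have hterm : ∀ n : ℕ,
      ‖(((i + (n + 1)).choose i : ℕ) : F) * d (i + (n + 1)) * θ ^ (n + 1)‖ ≤ r / (q:ℝ) ^ i := by
    intro n
    rw [le_div_iff₀ (pow_pos hq0 i)]
    have h1 := st13_term_norm hq hθ (((i + (n + 1)).choose i : ℕ) : F) (d (i + (n + 1)))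
      (IsUltrametricDist.norm_natCast_le_one F _) (n + 1)
    have h2 : ‖(((i + (n + 1)).choose i : ℕ) : F) * d (i + (n + 1)) * θ ^ (n + 1)‖ * (q:ℝ) ^ i
        ≤ (‖d (i + (n + 1))‖ * (q:ℝ) ^ (n + 1)) * (q:ℝ) ^ i := by
      have h3 := pow_pos hq0 i
      nlinarith [norm_nonneg ((((i + (n + 1)).choose i : ℕ) : F) * d (i + (n + 1)) * θ ^ (n + 1))]
    have h4 : (‖d (i + (n + 1))‖ * (q:ℝ) ^ (n + 1)) * (q:ℝ) ^ i = f (i + (n + 1)) := by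
      simp only [hf, pow_add]; ring
    have h5 : f (i + (n + 1)) ≤ r := hrle (i + (n + 1)) (by omega)
    linarith
  have hdi : ‖d i‖ ≤ r / (q:ℝ) ^ i := by
    have := IsUltrametricDist.norm_tsum_le_of_forall_le_of_nonneg
      (div_nonneg hr0.le (pow_pos hq0 i).le) hterm
    rwa [htail.tsum_eq, norm_neg] at this
  have hdieq : ‖d i‖ = M / (q:ℝ) ^ i := by
    rw [eq_div_iff (ne_of_gt (pow_pos hq0 i))]
    exact hfiM
  rw [hdieq, div_le_div_iff_of_pos_right (pow_pos hq0 i)] at hdi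
  linarith

lemma st13_exists {F : Type*} [NormedField F] [IsUltrametricDist F] [CompleteSpace F]
    {q : ℕ} (hq : 1 < q) {θ : F} (hθ : ‖θ‖ = (q : ℝ)) (a : ℕ → F)
    (ha : Tendsto (fun i => ‖a i‖ * (q : ℝ) ^ i) atTop (nhds 0))
    (b : ℕ → F)
    (hbdef : ∀ j : ℕ, HasSum (fun m : ℕ =>
      ((-1 : F) ^ m * (((j + m).choose j : ℕ) : F)) * a (j + m) * θ ^ m) (b j))
    (i : ℕ) :
    HasSum (fun n : ℕ => (((i + n).choose i : ℕ) : F) * b (i + n) * θ ^ n) (a i) := by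
  have hq0 : (0:ℝ) < (q:ℝ) := by exact_mod_cast Nat.lt_of_lt_of_le Nat.zero_lt_one hq.le
  set c' : ℕ → ℕ → F := fun j m => (-1 : F) ^ m * (((j + m).choose j : ℕ) : F) with hc'def
  have hc' : ∀ j m, ‖c' j m‖ ≤ 1 := by
    intro j m
    rw [hc'def]
    simp only [norm_mul, norm_pow, norm_neg, norm_one, one_pow, one_mul]
    exact IsUltrametricDist.norm_natCast_le_one F _
  set g : ℕ × ℕ → F := fun p =>
    (((i + p.1).choose i : ℕ) : F) * θ ^ p.1 * (c' (i + p.1) p.2 * a (i + p.1 + p.2) * θ ^ p.2)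
    with hgdef
  have hgbound : ∀ p : ℕ × ℕ,
      ‖g p‖ ≤ (‖a (i + p.1 + p.2)‖ * (q:ℝ) ^ (i + p.1 + p.2)) / (q:ℝ) ^ i := by
    intro p
    have h1 : ‖c' (i + p.1) p.2 * a (i + p.1 + p.2) * θ ^ p.2‖
        ≤ ‖a (i + p.1 + p.2)‖ * (q:ℝ) ^ p.2 := st13_term_norm hq hθ _ _ (hc' _ _) _
    have h2 : ‖g p‖ = ‖(((i + p.1).choose i : ℕ) : F)‖ * (q:ℝ) ^ p.1
        * ‖c' (i + p.1) p.2 * a (i + p.1 + p.2) * θ ^ p.2‖ := by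
      rw [hgdef]; simp only []
      rw [norm_mul, norm_mul, norm_pow, hθ]
    rw [h2, le_div_iff₀ (pow_pos hq0 i)]
    have h3 : ‖(((i + p.1).choose i : ℕ) : F)‖ ≤ 1 := IsUltrametricDist.norm_natCast_le_one F _
    have h4 : ‖a (i + p.1 + p.2)‖ * (q:ℝ) ^ (i + p.1 + p.2)
        = (‖a (i + p.1 + p.2)‖ * (q:ℝ) ^ p.2) * (q:ℝ) ^ p.1 * (q:ℝ) ^ i := by
      rw [pow_add, pow_add]; ring
    rw [h4]
    have h5 : (0:ℝ) ≤ (q:ℝ) ^ p.1 := by positivity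
    have h6 : (0:ℝ) ≤ (q:ℝ) ^ i := by positivity
    have h7 := norm_nonneg (c' (i + p.1) p.2 * a (i + p.1 + p.2) * θ ^ p.2)
    have h9 : ‖(((i + p.1).choose i : ℕ) : F)‖ * (q:ℝ) ^ p.1
        * ‖c' (i + p.1) p.2 * a (i + p.1 + p.2) * θ ^ p.2‖
        ≤ 1 * (q:ℝ) ^ p.1 * (‖a (i + p.1 + p.2)‖ * (q:ℝ) ^ p.2) := by
      apply mul_le_mul
      · apply mul_le_mul_of_nonneg_right h3 h5
      · exact h1
      · exact h7
      · positivity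
    calc ‖(((i + p.1).choose i : ℕ) : F)‖ * (q:ℝ) ^ p.1
        * ‖c' (i + p.1) p.2 * a (i + p.1 + p.2) * θ ^ p.2‖ * (q:ℝ) ^ i
        ≤ 1 * (q:ℝ) ^ p.1 * (‖a (i + p.1 + p.2)‖ * (q:ℝ) ^ p.2) * (q:ℝ) ^ i := by
          apply mul_le_mul_of_nonneg_right h9 h6
      _ = ‖a (i + p.1 + p.2)‖ * (q:ℝ) ^ p.2 * (q:ℝ) ^ p.1 * (q:ℝ) ^ i := by ring
  have hmap : Tendsto (fun p : ℕ × ℕ => i + p.1 + p.2) cofinite atTop := by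
    rw [tendsto_atTop]
    intro N
    rw [eventually_cofinite]
    apply Set.Finite.subset ((Finset.range N ×ˢ Finset.range N).finite_toSet)
    intro p hp
    simp only [Set.mem_setOf_eq, not_le] at hp
    simp only [Finset.coe_product, Set.mem_prod, Finset.mem_coe, Finset.mem_range]
    omega
  have hsg : Summable g := by
    apply NonarchimedeanAddGroup.summable_of_tendsto_cofinite_zero
    rw [tendsto_zero_iff_norm_tendsto_zero]
    apply squeeze_zero' (Eventually.of_forall fun p => norm_nonneg _)
      (Eventually.of_forall hgbound)
    have h1 : Tendsto (fun j : ℕ => (‖a j‖ * (q:ℝ) ^ j) / (q:ℝ) ^ i) atTop (nhds 0) := by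
      simpa using ha.div_const ((q:ℝ) ^ i)
    exact h1.comp hmap
  obtain ⟨T, hgsum⟩ := hsg
  have houter : HasSum (fun n : ℕ => (((i + n).choose i : ℕ) : F) * θ ^ n * b (i + n)) T := by
    apply hgsum.prod_fiberwise
    intro n
    exact (hbdef (i + n)).mul_left _
  have hfiber : ∀ k : ℕ, HasSum (fun p : (Finset.HasAntidiagonal.antidiagonal k : Finset (ℕ × ℕ)) => g ↑p)
      (∑ p ∈ Finset.HasAntidiagonal.antidiagonal k, g p) := by
    intro k
    have := hasSum_fintype (fun p : (Finset.HasAntidiagonal.antidiagonal k : Finset (ℕ × ℕ)) => g ↑p)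
    rwa [Finset.sum_coe_sort] at this
  have hksum : HasSum (fun k : ℕ => ∑ p ∈ Finset.HasAntidiagonal.antidiagonal k, g p) T := by
    apply HasSum.sigma ((Finset.HasAntidiagonal.sigmaAntidiagonalEquivProd.hasSum_iff).mpr hgsum)
    exact hfiber
  have hfun : ∀ k : ℕ, ∑ p ∈ Finset.HasAntidiagonal.antidiagonal k, g p = if k = 0 then a i else 0 := by
    intro k
    have hstep : ∑ p ∈ Finset.HasAntidiagonal.antidiagonal k, g p
        = ((∑ p ∈ Finset.HasAntidiagonal.antidiagonal k,
            (-1 : ℤ) ^ p.2 * ((i + p.1).choose i) * ((i + k).choose (i + p.1)) : ℤ) : F)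
          * (a (i + k) * θ ^ k) := by
      push_cast
      rw [Finset.sum_mul]
      apply Finset.sum_congr rfl
      rintro ⟨n, m⟩ hp
      rw [Finset.HasAntidiagonal.mem_antidiagonal] at hp
      have hik : i + n + m = i + k := by omega
      have hθk : θ ^ n * θ ^ m = θ ^ k := by rw [← pow_add, hp]
      rw [hgdef]
      simp only [hc'def]
      rw [hik, ← hθk]
      push_cast
      ring
    rw [hstep, st13_key_int]
    rcases Nat.eq_zero_or_pos k with h | h
    · simp [h]
    · simp [Nat.pos_iff_ne_zero.mp h]
  have hai : HasSum (fun k : ℕ => if k = 0 then a i else 0) T := by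
    have : (fun k : ℕ => ∑ p ∈ Finset.HasAntidiagonal.antidiagonal k, g p)
        = fun k : ℕ => if k = 0 then a i else 0 := funext hfun
    rwa [this] at hksum
  have hT : T = a i := hai.unique (hasSum_ite_eq 0 (a i))
  rw [hT] at houter
  have : (fun n : ℕ => (((i + n).choose i : ℕ) : F) * b (i + n) * θ ^ n)
      = fun n : ℕ => (((i + n).choose i : ℕ) : F) * θ ^ n * b (i + n) := by
    funext n; ring
  rw [this]
  exact houter

end St13Aux

/-- image of the map `η : 𝕋_θ → F[[t−θ]]`, Section 2.4 of the paper.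
(i) If `|b_j| q^j → 0` then for each `i` the family `(C(j,i) b_j θ^{j−i})_{j≥i}`
(reindexed by `j = i + n`) is summable, its sum `a_i` satisfies
`|a_i| q^i ≤ sup_{j≥i} |b_j| q^j`, and in particular `|a_i| q^i → 0`.
(ii) Conversely, every sequence `(a_i)` with `|a_i| q^i → 0` arises in this way from a
unique sequence `(b_j)` with `|b_j| q^j → 0`. -/
theorem statement13
    {F : Type*} [NormedField F] [IsUltrametricDist F] [CompleteSpace F]
    (q : ℕ) (hq : IsPrimePow q) (θ : F) (hθ : ‖θ‖ = (q : ℝ)) :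
    (∀ b : ℕ → F, Tendsto (fun j => ‖b j‖ * (q : ℝ) ^ j) atTop (nhds 0) →
      (∀ i : ℕ,
        Summable (fun n : ℕ => (((i + n).choose i : ℕ) : F) * b (i + n) * θ ^ n) ∧
        ‖∑' n : ℕ, (((i + n).choose i : ℕ) : F) * b (i + n) * θ ^ n‖ * (q : ℝ) ^ i
          ≤ ⨆ j : {j : ℕ // i ≤ j}, ‖b (j : ℕ)‖ * (q : ℝ) ^ (j : ℕ)) ∧
      Tendsto (fun i : ℕ =>
          ‖∑' n : ℕ, (((i + n).choose i : ℕ) : F) * b (i + n) * θ ^ n‖ * (q : ℝ) ^ i)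
        atTop (nhds 0))
    ∧ ∀ a : ℕ → F, Tendsto (fun i => ‖a i‖ * (q : ℝ) ^ i) atTop (nhds 0) →
        ∃! b : ℕ → F,
          Tendsto (fun j => ‖b j‖ * (q : ℝ) ^ j) atTop (nhds 0) ∧
          ∀ i : ℕ,
            HasSum (fun n : ℕ => (((i + n).choose i : ℕ) : F) * b (i + n) * θ ^ n) (a i) := by
  have hq1 : 1 < q := hq.one_lt
  constructor
  · intro b hb
    exact st13_lemA hq1 hθ (fun i n => (((i + n).choose i : ℕ) : F))
      (fun i n => IsUltrametricDist.norm_natCast_le_one F _) b hb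
  · intro a ha
    set c' : ℕ → ℕ → F := fun j m => (-1 : F) ^ m * (((j + m).choose j : ℕ) : F) with hc'def
    have hc' : ∀ j m, ‖c' j m‖ ≤ 1 := by
      intro j m
      rw [hc'def]
      simp only [norm_mul, norm_pow, norm_neg, norm_one, one_pow, one_mul]
      exact IsUltrametricDist.norm_natCast_le_one F _
    obtain ⟨hA1, hA2⟩ := st13_lemA hq1 hθ c' hc' a ha
    set b : ℕ → F := fun j => ∑' m : ℕ, c' j m * a (j + m) * θ ^ m with hbdef
    have hbsum : ∀ j : ℕ, HasSum (fun m : ℕ => c' j m * a (j + m) * θ ^ m) (b j) :=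
      fun j => (hA1 j).1.hasSum
    have hbt : Tendsto (fun j => ‖b j‖ * (q : ℝ) ^ j) atTop (nhds 0) := hA2
    have hbs : ∀ i : ℕ,
        HasSum (fun n : ℕ => (((i + n).choose i : ℕ) : F) * b (i + n) * θ ^ n) (a i) :=
      st13_exists hq1 hθ a ha b hbsum
    refine ⟨b, ⟨hbt, hbs⟩, ?_⟩
    rintro b1 ⟨hb1t, hb1s⟩
    set d : ℕ → F := fun j => b1 j - b j with hddef
    have hdt : Tendsto (fun j => ‖d j‖ * (q : ℝ) ^ j) atTop (nhds 0) := by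
      apply squeeze_zero (fun j => by positivity)
        (g := fun j => ‖b1 j‖ * (q : ℝ) ^ j + ‖b j‖ * (q : ℝ) ^ j)
      · intro j
        have h1 : ‖d j‖ ≤ ‖b1 j‖ + ‖b j‖ := norm_sub_le _ _
        have h2 : (0:ℝ) ≤ (q:ℝ) ^ j := by positivity
        nlinarith
      · simpa using hb1t.add hbt
    have hds : ∀ i : ℕ,
        HasSum (fun n : ℕ => (((i + n).choose i : ℕ) : F) * d (i + n) * θ ^ n) 0 := by
      intro i
      have := (hb1s i).sub (hbs i)
      rw [sub_self] at this
      have heq : (fun n : ℕ => (((i + n).choose i : ℕ) : F) * d (i + n) * θ ^ n)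
          = fun n : ℕ => (((i + n).choose i : ℕ) : F) * b1 (i + n) * θ ^ n
            - (((i + n).choose i : ℕ) : F) * b (i + n) * θ ^ n := by
        funext n
        simp only [hddef]
        ring
      rw [heq]
      exact this
    have hz := st13_uniq hq1 hθ d hdt hds
    funext j
    have := hz j
    simp only [hddef] at this
    exact sub_eq_zero.mp this
end
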